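/- arXiv:0905.3380 — 3 statements merged into one kernel-verified Lean document; each statement's English description precedes it below -/
import Mathlib

section
/- Suppose that for some integer k with δ+1 ≤ k ≤ ⌊b/2⌋ the curve B_k is δ-preserving. Then there exists a border. Specifically, if B_k is ≥δ then B_k itself is a border, and if B_k is <δ then the curve ρ defined by letting ρ(t) be the red point closest to B_k(t) among the red points lying to the left of B_k(t) in π^t is well-defined and is a border. -/
open Finset

/-- An allowable sequence on `n` points (the points are the elements of `Fin n`).
`pos t x` is the position (from left to right, `0`-based) of point `x`
in the linear ordering `π^t`. -/
structure AllowableSeq (n : ℕ) where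
  pos : ℤ → Equiv.Perm (Fin n)
  adj : ∀ t : ℤ, ∃ p q : Fin n,
    ((pos t q : ℕ) = (pos t p : ℕ) + 1) ∧
    pos (t + 1) = (Equiv.swap p q).trans (pos t)
  rev : ∀ t : ℤ, pos (t + (n.choose 2 : ℤ)) = (pos t).trans Fin.revPerm

namespace AllowableSeq

variable {n : ℕ}

/-- The weight of a point: `+1` for blue, `-1` for red. -/
def wt (blue : Fin n → Bool) (x : Fin n) : ℤ := if blue x then 1 else -1

/-- The transposition `τ_{t+1}` (leading from `π^t` to `π^{t+1}`) swaps the points `p` and `q`. -/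
def SwapsAt (A : AllowableSeq n) (t : ℤ) (p q : Fin n) : Prop :=
  p ≠ q ∧ A.pos (t + 1) = (Equiv.swap p q).trans (A.pos t)

/-- `τ_{t+1}` is a balanced transposition swapping `p` and `q`: one of them is blue and the
other red, and the total weight of the points strictly to the left of the adjacent
pair in `π^t` equals `δ`. -/
def BalancedSwap (A : AllowableSeq n) (blue : Fin n → Bool) (δ : ℤ) (t : ℤ)
    (p q : Fin n) : Prop :=
  A.SwapsAt t p q ∧ (blue p ↔ ¬ blue q) ∧
  (∑ x : Fin n, if (A.pos t x : ℕ) < min (A.pos t p : ℕ) (A.pos t q : ℕ)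
      then wt blue x else 0) = δ

/-- The set of unordered pairs of points swapped by some balanced transposition of the
allowable sequence; its cardinality is the number of distinct balanced transpositions. -/
def balancedPairs (A : AllowableSeq n) (blue : Fin n → Bool) (δ : ℤ) : Set (Sym2 (Fin n)) :=
  { s | ∃ p q t, s = s(p, q) ∧ A.BalancedSwap blue δ t p q }

/-- A curve: a map `ℤ → Fin n` that is periodic with period `2 * C(n,2)`. -/
def IsCurve (A : AllowableSeq n) (γ : ℤ → Fin n) : Prop :=
  ∀ t : ℤ, γ (t + 2 * (n.choose 2 : ℤ)) = γ t

/-- The weight of a curve `γ` at time `t`: the sum of the weights of the points lying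
strictly to the left of `γ t` in `π^t`. -/
def cweight (A : AllowableSeq n) (blue : Fin n → Bool) (γ : ℤ → Fin n) (t : ℤ) : ℤ :=
  ∑ x : Fin n, if A.pos t x < A.pos t (γ t) then wt blue x else 0

/-- `γ` is the curve `Q_k` (with `k` 1-based): at every time `t`, `γ t` is the `k`-th point
of `Q` from left to right in `π^t`, i.e. `γ t ∈ Q` and exactly `k - 1` points of `Q` lie
strictly to the left of `γ t`. -/
def IsKth (A : AllowableSeq n) (Q : Finset (Fin n)) (k : ℕ) (γ : ℤ → Fin n) : Prop :=
  ∀ t : ℤ, γ t ∈ Q ∧ (Q.filter (fun x => A.pos t x < A.pos t (γ t))).card = k - 1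

/-- The mirror curve `γ̄` of `γ`, defined by `γ̄ (t + C(n,2)) = γ t`. -/
def mirror (γ : ℤ → Fin n) : ℤ → Fin n := fun t => γ (t - (n.choose 2 : ℤ))

/-- A border: a curve that is either blue and `≥δ` or red and `≤δ`, such that
(I) consecutive values are equal or have no point of the same colour between them, and
(II) it lies strictly to the left of its mirror curve. -/
def IsBorder (A : AllowableSeq n) (blue : Fin n → Bool) (δ : ℤ) (γ : ℤ → Fin n) : Prop :=
  A.IsCurve γ ∧
  (∀ t : ℤ, A.pos t (γ t) < A.pos t (mirror γ t)) ∧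
  (((∀ t : ℤ, blue (γ t) = true) ∧ (∀ t : ℤ, δ ≤ A.cweight blue γ t) ∧
      ∀ t : ℤ, γ (t + 1) = γ t ∨ ∀ x : Fin n, blue x = true →
        ¬ (min (A.pos (t+1) (γ t)) (A.pos (t+1) (γ (t+1))) < A.pos (t+1) x ∧
           A.pos (t+1) x < max (A.pos (t+1) (γ t)) (A.pos (t+1) (γ (t+1)))))
   ∨ ((∀ t : ℤ, blue (γ t) = false) ∧ (∀ t : ℤ, A.cweight blue γ t ≤ δ) ∧
      ∀ t : ℤ, γ (t + 1) = γ t ∨ ∀ x : Fin n, blue x = false →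
        ¬ (min (A.pos (t+1) (γ t)) (A.pos (t+1) (γ (t+1))) < A.pos (t+1) x ∧
           A.pos (t+1) x < max (A.pos (t+1) (γ t)) (A.pos (t+1) (γ (t+1))))))

/-- `Γ` is `⪯`-maximal among all borders: it is a border and no border lies strictly
to its right. -/
def IsMaxBorder (A : AllowableSeq n) (blue : Fin n → Bool) (δ : ℤ) (Γ : ℤ → Fin n) : Prop :=
  A.IsBorder blue δ Γ ∧
  ∀ γ : ℤ → Fin n, A.IsBorder blue δ γ → ¬ (∀ t : ℤ, A.pos t (Γ t) < A.pos t (γ t))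

/-- The curve `α` has the weight change `a ⇝ b` between the curves `lo` and `hi`:
at some time `t` its weight changes from `a` to `b`, the change occurring to the right
of `lo` and to the left of `hi`. -/
def HasChangeBetween (A : AllowableSeq n) (blue : Fin n → Bool) (a b : ℤ)
    (α lo hi : ℤ → Fin n) : Prop :=
  ∃ t : ℤ, A.cweight blue α t = a ∧ A.cweight blue α (t+1) = b ∧
    A.pos t (lo t) ≤ A.pos t (α t) ∧ A.pos (t+1) (lo (t+1)) < A.pos (t+1) (α (t+1)) ∧
    A.pos t (α t) ≤ A.pos t (hi t) ∧ A.pos (t+1) (α (t+1)) < A.pos (t+1) (hi (t+1))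

/-- The number of blue points strictly to the left of the adjacent pair `p, q` in `π^t`. -/
def blueLeftPair (A : AllowableSeq n) (blue : Fin n → Bool) (t : ℤ) (p q : Fin n) : ℕ :=
  (Finset.univ.filter (fun y => blue y = true ∧
    (A.pos t y : ℕ) < min (A.pos t p : ℕ) (A.pos t q : ℕ))).card

end AllowableSeq

open AllowableSeq

set_option maxHeartbeats 1000000 in
lemma key_arith (i au bu av bv ax bx ag bg ag' bg' : ℕ)
    (Hu : (au = i ∧ bu = i+1) ∨ (au = i+1 ∧ bu = i) ∨ (bu = au ∧ au ≠ i ∧ au ≠ i+1))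
    (Hv : (av = i ∧ bv = i+1) ∨ (av = i+1 ∧ bv = i) ∨ (bv = av ∧ av ≠ i ∧ av ≠ i+1))
    (Hx : (ax = i ∧ bx = i+1) ∨ (ax = i+1 ∧ bx = i) ∨ (bx = ax ∧ ax ≠ i ∧ ax ≠ i+1))
    (Hg : (ag = i ∧ bg = i+1) ∨ (ag = i+1 ∧ bg = i) ∨ (bg = ag ∧ ag ≠ i ∧ ag ≠ i+1))
    (Hg' : (ag' = i ∧ bg' = i+1) ∨ (ag' = i+1 ∧ bg' = i) ∨ (bg' = ag' ∧ ag' ≠ i ∧ ag' ≠ i+1))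
    (HG : (ag' = ag ∧ bg' = bg) ∨ (ag = i ∧ bg' = i) ∨ (ag = i+1 ∧ bg' = i+1))
    (D1 : au ≠ ag) (D2 : bu ≠ bg) (D3 : au ≠ ag') (D4 : bu ≠ bg')
    (D5 : av ≠ ag) (D6 : bv ≠ bg) (D7 : av ≠ ag') (D8 : bv ≠ bg')
    (D9 : ax ≠ ag) (D10 : bx ≠ bg) (D11 : ax ≠ ag') (D12 : bx ≠ bg')
    (D13 : ax ≠ au) (D14 : bx ≠ bu) (D15 : ax ≠ av) (D16 : bx ≠ bv)
    (D17 : au ≠ av) (D18 : bu ≠ bv)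
    (M1 : av < ag → av ≤ au) (M2 : ax < ag → ax ≤ au)
    (M3 : bx < bg' → bx ≤ bv) (M4 : bu < bg' → bu ≤ bv)
    (S1 : au < ag) (S2 : bv < bg')
    (hb1 : min bu bv < bx) (hb2 : bx < max bu bv) : False := by
  omega

namespace AllowableSeq

variable {n : ℕ}


def cnt (A : AllowableSeq n) (Q : Finset (Fin n)) (t : ℤ) (x : Fin n) : ℕ :=
  (Q.filter (fun y => A.pos t y < A.pos t x)).card

lemma pos_ne (A : AllowableSeq n) {x y : Fin n} (t : ℤ) (h : x ≠ y) :
    (A.pos t x : ℕ) ≠ (A.pos t y : ℕ) :=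
  fun hc => h ((A.pos t).injective (Fin.val_inj.mp hc))

lemma cnt_mono (A : AllowableSeq n) {Q : Finset (Fin n)} {t : ℤ} {x y : Fin n}
    (h : (A.pos t y : ℕ) ≤ (A.pos t x : ℕ)) : A.cnt Q t y ≤ A.cnt Q t x := by
  apply card_le_card
  intro z hz
  rw [mem_filter] at hz ⊢
  refine ⟨hz.1, ?_⟩
  have h2 : (A.pos t z : ℕ) < (A.pos t y : ℕ) := hz.2
  exact show (A.pos t z : ℕ) < (A.pos t x : ℕ) by omega

lemma cnt_strict (A : AllowableSeq n) {Q : Finset (Fin n)} {t : ℤ} {x y : Fin n}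
    (hx : x ∈ Q) (h : (A.pos t x : ℕ) < (A.pos t y : ℕ)) : A.cnt Q t x < A.cnt Q t y := by
  apply card_lt_card
  rw [Finset.ssubset_iff_of_subset]
  · exact ⟨x, by simp [mem_filter, hx]; exact h, by simp [mem_filter]⟩
  · intro z hz
    rw [mem_filter] at hz ⊢
    have h2 : (A.pos t z : ℕ) < (A.pos t x : ℕ) := hz.2
    exact ⟨hz.1, show (A.pos t z : ℕ) < (A.pos t y : ℕ) by omega⟩

lemma pos_lt_of_cnt_lt (A : AllowableSeq n) {Q : Finset (Fin n)} {t : ℤ} {x y : Fin n}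
    (h : A.cnt Q t x < A.cnt Q t y) : (A.pos t x : ℕ) < (A.pos t y : ℕ) := by
  by_contra hc
  exact absurd (A.cnt_mono (Q := Q) (t := t) (by omega : (A.pos t y : ℕ) ≤ (A.pos t x : ℕ))) (by omega)

lemma eq_of_cnt_eq (A : AllowableSeq n) {Q : Finset (Fin n)} {t : ℤ} {x y : Fin n}
    (hx : x ∈ Q) (hy : y ∈ Q) (h : A.cnt Q t x = A.cnt Q t y) : x = y := by
  rcases lt_trichotomy (A.pos t x : ℕ) (A.pos t y : ℕ) with hlt | heq | hgt
  · exact absurd (A.cnt_strict hx hlt) (by omega)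
  · exact (A.pos t).injective (Fin.val_inj.mp heq)
  · exact absurd (A.cnt_strict hy hgt) (by omega)

lemma pos_two_period (A : AllowableSeq n) (t : ℤ) :
    A.pos (t + 2 * (n.choose 2 : ℤ)) = A.pos t := by
  have h1 := A.rev t
  have h2 := A.rev (t + (n.choose 2 : ℤ))
  have he : t + 2 * (n.choose 2 : ℤ) = t + (n.choose 2 : ℤ) + (n.choose 2 : ℤ) := by ring
  rw [he, h2, h1]
  ext x
  simp [Equiv.trans_apply, Fin.rev_rev]

lemma pos_mirror (A : AllowableSeq n) (t : ℤ) (x : Fin n) :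
    (A.pos t x : ℕ) + 1 + (A.pos (t - (n.choose 2 : ℤ)) x : ℕ) = n := by
  have h := A.rev (t - (n.choose 2 : ℤ))
  rw [sub_add_cancel] at h
  rw [h]
  have h2 := (A.pos (t - (n.choose 2 : ℤ)) x).isLt
  simp [Equiv.trans_apply, Fin.val_rev]
  omega

lemma cnt_flip (A : AllowableSeq n) {Q : Finset (Fin n)} {t : ℤ} {x : Fin n} (hx : x ∈ Q) :
    A.cnt Q t x + A.cnt Q (t - (n.choose 2 : ℤ)) x + 1 = Q.card := by
  set s := t - (n.choose 2 : ℤ) with hs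
  have hflip : Q.filter (fun y => A.pos t y < A.pos t x)
      = Q.filter (fun y => A.pos s x < A.pos s y) := by
    apply filter_congr
    intro y _
    have h1 := A.pos_mirror t y
    have h2 := A.pos_mirror t x
    rw [← hs] at h1 h2
    constructor
    · intro hlt
      have : (A.pos t y : ℕ) < (A.pos t x : ℕ) := hlt
      exact show (A.pos s x : ℕ) < (A.pos s y : ℕ) by omega
    · intro hlt
      have : (A.pos s x : ℕ) < (A.pos s y : ℕ) := hlt
      exact show (A.pos t y : ℕ) < (A.pos t x : ℕ) by omega
  have hpart := card_filter_add_card_filter_not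
    (s := Q) (p := fun y => A.pos s y < A.pos s x)
  have hneg : Q.filter (fun y => ¬ A.pos s y < A.pos s x)
      = insert x (Q.filter (fun y => A.pos s x < A.pos s y)) := by
    ext z
    simp only [mem_filter, mem_insert]
    constructor
    · rintro ⟨hzQ, hz⟩
      have hz' : ¬ (A.pos s z : ℕ) < (A.pos s x : ℕ) := hz
      rcases eq_or_ne z x with rfl | hne
      · exact Or.inl rfl
      · have := A.pos_ne s hne
        exact Or.inr ⟨hzQ, show (A.pos s x : ℕ) < (A.pos s z : ℕ) by omega⟩
    · rintro (rfl | ⟨hzQ, hz⟩)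
      · exact ⟨hx, by simp⟩
      · have hz' : (A.pos s x : ℕ) < (A.pos s z : ℕ) := hz
        exact ⟨hzQ, show ¬ (A.pos s z : ℕ) < (A.pos s x : ℕ) by omega⟩
  have hnotmem : x ∉ Q.filter (fun y => A.pos s x < A.pos s y) := by
    simp [mem_filter]
  unfold cnt
  rw [hflip]
  rw [hneg, card_insert_of_notMem hnotmem] at hpart
  omega


lemma pos_succ (A : AllowableSeq n) {t : ℤ} {p q : Fin n}
    (hswap : A.pos (t + 1) = (Equiv.swap p q).trans (A.pos t)) (x : Fin n) :
    A.pos (t + 1) x = A.pos t (Equiv.swap p q x) := by rw [hswap]; rfl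

/-- Trichotomy of position changes across one swap step. -/
lemma pos_tri (A : AllowableSeq n) {t : ℤ} {p q : Fin n}
    (hpq : (A.pos t q : ℕ) = (A.pos t p : ℕ) + 1)
    (hswap : A.pos (t + 1) = (Equiv.swap p q).trans (A.pos t)) (y : Fin n) :
    ((A.pos t y : ℕ) = (A.pos t p : ℕ) ∧ (A.pos (t+1) y : ℕ) = (A.pos t p : ℕ) + 1) ∨
    ((A.pos t y : ℕ) = (A.pos t p : ℕ) + 1 ∧ (A.pos (t+1) y : ℕ) = (A.pos t p : ℕ)) ∨
    ((A.pos (t+1) y : ℕ) = (A.pos t y : ℕ) ∧ (A.pos t y : ℕ) ≠ (A.pos t p : ℕ) ∧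
      (A.pos t y : ℕ) ≠ (A.pos t p : ℕ) + 1) := by
  have hpq' : p ≠ q := fun h => by rw [h] at hpq; omega
  rcases eq_or_ne y p with rfl | hyp
  · left
    rw [A.pos_succ hswap, Equiv.swap_apply_left]
    exact ⟨rfl, hpq⟩
  rcases eq_or_ne y q with rfl | hyq
  · right; left
    rw [A.pos_succ hswap, Equiv.swap_apply_right]
    exact ⟨hpq, rfl⟩
  · right; right
    rw [A.pos_succ hswap, Equiv.swap_apply_of_ne_of_ne hyp hyq]
    have h1 := A.pos_ne t hyp
    have h2 := A.pos_ne t hyq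
    omega

/-- Count is unchanged across a step for points not involved in the swap. -/
lemma cnt_stable (A : AllowableSeq n) {t : ℤ} {p q : Fin n}
    (hpq : (A.pos t q : ℕ) = (A.pos t p : ℕ) + 1)
    (hswap : A.pos (t + 1) = (Equiv.swap p q).trans (A.pos t))
    {z : Fin n} (hzp : z ≠ p) (hzq : z ≠ q) (Q : Finset (Fin n)) :
    A.cnt Q (t+1) z = A.cnt Q t z := by
  unfold cnt
  apply congrArg
  apply filter_congr
  intro y _
  have hz : (A.pos (t+1) z : ℕ) = (A.pos t z : ℕ) := by
    rw [A.pos_succ hswap, Equiv.swap_apply_of_ne_of_ne hzp hzq]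
  have hz1 := A.pos_ne t hzp
  have hz2 := A.pos_ne t hzq
  have hy := A.pos_tri hpq hswap y
  constructor
  · intro hlt
    have : (A.pos (t+1) y : ℕ) < (A.pos (t+1) z : ℕ) := hlt
    exact show (A.pos t y : ℕ) < (A.pos t z : ℕ) by omega
  · intro hlt
    have : (A.pos t y : ℕ) < (A.pos t z : ℕ) := hlt
    exact show (A.pos (t+1) y : ℕ) < (A.pos (t+1) z : ℕ) by omega


lemma cweight_eq_cnt (A : AllowableSeq n) (blue : Fin n → Bool) (γ : ℤ → Fin n) (t : ℤ) :
    A.cweight blue γ t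
      = (A.cnt (univ.filter (fun x => blue x = true)) t (γ t) : ℤ)
        - (A.cnt (univ.filter (fun x => blue x = false)) t (γ t) : ℤ) := by
  unfold cweight cnt wt
  rw [← sum_filter]
  have hsplit : ∀ x ∈ univ.filter (fun y => A.pos t y < A.pos t (γ t)),
      (if blue x then (1:ℤ) else -1)
      = (if blue x = true then (1:ℤ) else 0) - (if blue x = false then (1:ℤ) else 0) := by
    intro x _; cases hb : blue x <;> simp
  rw [sum_congr rfl hsplit, sum_sub_distrib, sum_boole, sum_boole,
    filter_comm (s := univ) (p := fun y => A.pos t y < A.pos t (γ t)) (q := fun x => blue x = true),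
    filter_comm (s := univ) (p := fun y => A.pos t y < A.pos t (γ t)) (q := fun x => blue x = false)]

lemma cnt_time_congr (A : AllowableSeq n) {t₁ t₂ : ℤ} (h : A.pos t₁ = A.pos t₂)
    (Q : Finset (Fin n)) (x : Fin n) : A.cnt Q t₁ x = A.cnt Q t₂ x := by
  unfold cnt; rw [h]

lemma kth_cnt (A : AllowableSeq n) {Q : Finset (Fin n)} {k : ℕ} {γ : ℤ → Fin n}
    (hγ : A.IsKth Q k γ) (t : ℤ) : A.cnt Q t (γ t) = k - 1 := (hγ t).2

lemma kth_periodic (A : AllowableSeq n) {Q : Finset (Fin n)} {k : ℕ} {γ : ℤ → Fin n}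
    (hγ : A.IsKth Q k γ) (t : ℤ) : γ (t + 2 * (n.choose 2 : ℤ)) = γ t := by
  apply A.eq_of_cnt_eq (t := t) (hγ (t + 2 * (n.choose 2 : ℤ))).1 (hγ t).1
  rw [← A.cnt_time_congr (A.pos_two_period t) Q (γ (t + 2 * (n.choose 2 : ℤ)))]
  rw [A.kth_cnt hγ, A.kth_cnt hγ]

lemma kth_mirror (A : AllowableSeq n) {Q : Finset (Fin n)} {k : ℕ} {γ : ℤ → Fin n}
    (hγ : A.IsKth Q k γ) (hk0 : 1 ≤ k) (h2k : 2 * k ≤ Q.card) (t : ℤ) :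
    (A.pos t (γ t) : ℕ) < (A.pos t (γ (t - (n.choose 2 : ℤ))) : ℕ) := by
  apply A.pos_lt_of_cnt_lt (Q := Q)
  have h1 := A.kth_cnt hγ t
  have h2 := A.kth_cnt hγ (t - (n.choose 2 : ℤ))
  have h3 := A.cnt_flip (t := t) (hγ (t - (n.choose 2 : ℤ))).1
  omega

lemma kth_step (A : AllowableSeq n) {Q : Finset (Fin n)} {k : ℕ} {γ : ℤ → Fin n}
    (hγ : A.IsKth Q k γ) {t : ℤ} {p q : Fin n}
    (hpq : (A.pos t q : ℕ) = (A.pos t p : ℕ) + 1)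
    (hswap : A.pos (t + 1) = (Equiv.swap p q).trans (A.pos t)) :
    γ (t+1) = γ t ∨ (γ t = p ∧ γ (t+1) = q) ∨ (γ t = q ∧ γ (t+1) = p) := by
  by_cases hE : γ (t+1) = γ t
  · exact Or.inl hE
  have hg : γ t = p ∨ γ t = q := by
    by_contra hc
    push_neg at hc
    have h1 := A.cnt_stable hpq hswap hc.1 hc.2 Q
    exact hE (A.eq_of_cnt_eq (t := t+1) (hγ (t+1)).1 (hγ t).1
      (by rw [A.kth_cnt hγ, h1, A.kth_cnt hγ]))
  have hg' : γ (t+1) = p ∨ γ (t+1) = q := by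
    by_contra hc
    push_neg at hc
    have h1 := A.cnt_stable hpq hswap hc.1 hc.2 Q
    exact hE (A.eq_of_cnt_eq (t := t) (hγ (t+1)).1 (hγ t).1
      (by rw [← h1, A.kth_cnt hγ, A.kth_cnt hγ]))
  rcases hg with h1|h1 <;> rcases hg' with h2|h2
  · exact absurd (h2.trans h1.symm) hE
  · exact Or.inr (Or.inl ⟨h1, h2⟩)
  · exact Or.inr (Or.inr ⟨h1, h2⟩)
  · exact absurd (h2.trans h1.symm) hE


/-- The defining property of the curve ρ, in numeric (ℕ-valued) form. -/
def RhoSpec (A : AllowableSeq n) (blue : Fin n → Bool) (γ ρ : ℤ → Fin n) : Prop :=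
  ∀ t : ℤ, blue (ρ t) = false ∧ (A.pos t (ρ t) : ℕ) < (A.pos t (γ t) : ℕ) ∧
    ∀ x : Fin n, blue x = false → (A.pos t x : ℕ) < (A.pos t (γ t) : ℕ) →
      (A.pos t x : ℕ) ≤ (A.pos t (ρ t) : ℕ)

lemma rho_cntR (A : AllowableSeq n) {blue : Fin n → Bool} {γ ρ : ℤ → Fin n}
    (hρ : RhoSpec A blue γ ρ) (t : ℤ) :
    A.cnt (univ.filter (fun x => blue x = false)) t (ρ t) + 1
      = A.cnt (univ.filter (fun x => blue x = false)) t (γ t) := by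
  obtain ⟨hred, hlt, hmax⟩ := hρ t
  unfold cnt
  have hkey : (univ.filter (fun x => blue x = false)).filter
        (fun y => A.pos t y < A.pos t (ρ t))
      = ((univ.filter (fun x => blue x = false)).filter
        (fun y => A.pos t y < A.pos t (γ t))).erase (ρ t) := by
    ext z
    simp only [mem_erase, mem_filter, mem_univ, true_and]
    constructor
    · rintro ⟨hz1, hz2⟩
      have hz2' : (A.pos t z : ℕ) < (A.pos t (ρ t) : ℕ) := hz2
      refine ⟨fun h => by rw [h] at hz2'; omega, hz1, ?_⟩
      exact show (A.pos t z : ℕ) < (A.pos t (γ t) : ℕ) by omega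
    · rintro ⟨hz0, hz1, hz2⟩
      have hz2' : (A.pos t z : ℕ) < (A.pos t (γ t) : ℕ) := hz2
      have h3 := hmax z hz1 hz2'
      have h4 := A.pos_ne t hz0
      exact ⟨hz1, show (A.pos t z : ℕ) < (A.pos t (ρ t) : ℕ) by omega⟩
  rw [hkey]
  apply card_erase_add_one
  simp only [mem_filter, mem_univ, true_and]
  exact ⟨hred, hlt⟩

lemma rho_cweight (A : AllowableSeq n) {blue : Fin n → Bool} {γ ρ : ℤ → Fin n}
    (hρ : RhoSpec A blue γ ρ) (t : ℤ) :
    A.cweight blue ρ t ≤ A.cweight blue γ t + 1 := by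
  obtain ⟨hred, hlt, hmax⟩ := hρ t
  have h1 := A.cweight_eq_cnt blue ρ t
  have h2 := A.cweight_eq_cnt blue γ t
  have h3 := A.rho_cntR hρ t
  have h4 : A.cnt (univ.filter (fun x => blue x = true)) t (ρ t)
      ≤ A.cnt (univ.filter (fun x => blue x = true)) t (γ t) :=
    A.cnt_mono (by omega)
  omega

lemma rho_periodic (A : AllowableSeq n) {blue : Fin n → Bool} {k : ℕ} {γ ρ : ℤ → Fin n}
    (hγ : A.IsKth (univ.filter (fun x => blue x = true)) k γ)
    (hρ : RhoSpec A blue γ ρ) (t : ℤ) : ρ (t + 2 * (n.choose 2 : ℤ)) = ρ t := by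
  have hper := A.pos_two_period t
  have hγper := A.kth_periodic hγ t
  obtain ⟨hred, hlt, hmax⟩ := hρ t
  obtain ⟨hred', hlt', hmax'⟩ := hρ (t + 2 * (n.choose 2 : ℤ))
  rw [hper, hγper] at hlt' hmax'
  have h1 := hmax (ρ (t + 2 * (n.choose 2 : ℤ))) hred' hlt'
  have h2 := hmax' (ρ t) hred hlt
  exact (A.pos t).injective (Fin.val_inj.mp (by omega))

lemma rho_mirror (A : AllowableSeq n) {blue : Fin n → Bool} {k : ℕ} {γ ρ : ℤ → Fin n}
    (hγ : A.IsKth (univ.filter (fun x => blue x = true)) k γ)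
    (hρ : RhoSpec A blue γ ρ) (hk0 : 1 ≤ k)
    (h2k : 2 * k ≤ (univ.filter (fun x => blue x = true)).card) (t : ℤ) :
    (A.pos t (ρ t) : ℕ) < (A.pos t (ρ (t - (n.choose 2 : ℤ))) : ℕ) := by
  have s1 := (hρ t).2.1
  have s2 := A.kth_mirror hγ hk0 h2k t
  have s3 := (hρ (t - (n.choose 2 : ℤ))).2.1
  have m1 := A.pos_mirror t (ρ (t - (n.choose 2 : ℤ)))
  have m2 := A.pos_mirror t (γ (t - (n.choose 2 : ℤ)))
  omega

set_option maxHeartbeats 1600000 in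
lemma rho_step (A : AllowableSeq n) {blue : Fin n → Bool} {k : ℕ} {γ ρ : ℤ → Fin n}
    (hγ : A.IsKth (univ.filter (fun x => blue x = true)) k γ)
    (hρ : RhoSpec A blue γ ρ) (t : ℤ)
    (x : Fin n) (hx : blue x = false)
    (hb1 : min (A.pos (t+1) (ρ t) : ℕ) (A.pos (t+1) (ρ (t+1)) : ℕ) < (A.pos (t+1) x : ℕ))
    (hb2 : (A.pos (t+1) x : ℕ) < max (A.pos (t+1) (ρ t) : ℕ) (A.pos (t+1) (ρ (t+1)) : ℕ)) :
    False := by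
  obtain ⟨p, q, hpq, hswap⟩ := A.adj t
  obtain ⟨hured, S1, M_t⟩ := hρ t
  obtain ⟨hvred, S2, M_t1⟩ := hρ (t+1)
  have hgblue : blue (γ t) = true := (mem_filter.mp (hγ t).1).2
  have hg'blue : blue (γ (t+1)) = true := (mem_filter.mp (hγ (t+1)).1).2
  -- pairwise distinctness from colours / betweenness
  have ne_ug : ρ t ≠ γ t := fun h => by rw [h, hgblue] at hured; exact Bool.noConfusion hured
  have ne_ug' : ρ t ≠ γ (t+1) := fun h => by rw [h, hg'blue] at hured; exact Bool.noConfusion hured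
  have ne_vg : ρ (t+1) ≠ γ t := fun h => by rw [h, hgblue] at hvred; exact Bool.noConfusion hvred
  have ne_vg' : ρ (t+1) ≠ γ (t+1) := fun h => by rw [h, hg'blue] at hvred; exact Bool.noConfusion hvred
  have ne_xg : x ≠ γ t := fun h => by rw [h, hgblue] at hx; exact Bool.noConfusion hx
  have ne_xg' : x ≠ γ (t+1) := fun h => by rw [h, hg'blue] at hx; exact Bool.noConfusion hx
  have ne_xu : x ≠ ρ t := fun h => by rw [h] at hb1 hb2; omega
  have ne_xv : x ≠ ρ (t+1) := fun h => by rw [h] at hb1 hb2; omega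
  have ne_uv : ρ t ≠ ρ (t+1) := fun h => by rw [h] at hb1 hb2; omega
  have D1 := A.pos_ne t ne_ug
  have D2 := A.pos_ne (t+1) ne_ug
  have D3 := A.pos_ne t ne_ug'
  have D4 := A.pos_ne (t+1) ne_ug'
  have D5 := A.pos_ne t ne_vg
  have D6 := A.pos_ne (t+1) ne_vg
  have D7 := A.pos_ne t ne_vg'
  have D8 := A.pos_ne (t+1) ne_vg'
  have D9 := A.pos_ne t ne_xg
  have D10 := A.pos_ne (t+1) ne_xg
  have D11 := A.pos_ne t ne_xg'
  have D12 := A.pos_ne (t+1) ne_xg'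
  have D13 := A.pos_ne t ne_xu
  have D14 := A.pos_ne (t+1) ne_xu
  have D15 := A.pos_ne t ne_xv
  have D16 := A.pos_ne (t+1) ne_xv
  have D17 := A.pos_ne t ne_uv
  have D18 := A.pos_ne (t+1) ne_uv
  -- maximality instantiations
  have M1 := M_t (ρ (t+1)) hvred
  have M2 := M_t x hx
  have M3 := M_t1 x hx
  have M4 := M_t1 (ρ t) hured
  have Hu := A.pos_tri hpq hswap (ρ t)
  have Hv := A.pos_tri hpq hswap (ρ (t+1))
  have Hx := A.pos_tri hpq hswap x
  have Hg := A.pos_tri hpq hswap (γ t)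
  have Hg' := A.pos_tri hpq hswap (γ (t+1))
  -- γ step positional facts
  have HG : ((A.pos t (γ (t+1)) : ℕ) = (A.pos t (γ t) : ℕ) ∧
             (A.pos (t+1) (γ (t+1)) : ℕ) = (A.pos (t+1) (γ t) : ℕ)) ∨
            ((A.pos t (γ t) : ℕ) = (A.pos t p : ℕ) ∧
             (A.pos (t+1) (γ (t+1)) : ℕ) = (A.pos t p : ℕ)) ∨
            ((A.pos t (γ t) : ℕ) = (A.pos t p : ℕ) + 1 ∧
             (A.pos (t+1) (γ (t+1)) : ℕ) = (A.pos t p : ℕ) + 1) := by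
    rcases A.kth_step hγ hpq hswap with h|⟨h1,h2⟩|⟨h1,h2⟩
    · left; rw [h]; exact ⟨rfl, rfl⟩
    · right; left
      refine ⟨by rw [h1], ?_⟩
      rw [h2, A.pos_succ hswap, Equiv.swap_apply_right]
    · right; right
      refine ⟨by rw [h1]; exact hpq, ?_⟩
      rw [h2, A.pos_succ hswap, Equiv.swap_apply_left]; exact hpq
  exact key_arith _ _ _ _ _ _ _ _ _ _ _ Hu Hv Hx Hg Hg' HG D1 D2 D3 D4 D5 D6 D7 D8
    D9 D10 D11 D12 D13 D14 D15 D16 D17 D18 M1 M2 M3 M4 S1 S2 hb1 hb2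

lemma fin_min_val {m : ℕ} (a b : Fin m) : ((min a b : Fin m) : ℕ) = min (a : ℕ) (b : ℕ) := by
  rcases le_total a b with h|h
  · rw [min_eq_left h]; have : (a:ℕ) ≤ b := h; omega
  · rw [min_eq_right h]; have : (b:ℕ) ≤ a := h; omega

lemma fin_max_val {m : ℕ} (a b : Fin m) : ((max a b : Fin m) : ℕ) = max (a : ℕ) (b : ℕ) := by
  rcases le_total a b with h|h
  · rw [max_eq_right h]; have : (a:ℕ) ≤ b := h; omega
  · rw [max_eq_left h]; have : (b:ℕ) ≤ a := h; omega

lemma kth_condI (A : AllowableSeq n) {Q : Finset (Fin n)} {k : ℕ} {γ : ℤ → Fin n}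
    (hγ : A.IsKth Q k γ) (blue : Fin n → Bool) (t : ℤ) :
    γ (t + 1) = γ t ∨ ∀ x : Fin n, blue x = true →
        ¬ (min (A.pos (t+1) (γ t)) (A.pos (t+1) (γ (t+1))) < A.pos (t+1) x ∧
           A.pos (t+1) x < max (A.pos (t+1) (γ t)) (A.pos (t+1) (γ (t+1)))) := by
  obtain ⟨p, q, hpq, hswap⟩ := A.adj t
  rcases A.kth_step hγ hpq hswap with h|⟨h1,h2⟩|⟨h1,h2⟩
  · exact Or.inl h
  · right
    rintro x - ⟨c1, c2⟩
    have e1 : (A.pos (t+1) (γ t) : ℕ) = (A.pos t p : ℕ) + 1 := by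
      rw [h1, A.pos_succ hswap, Equiv.swap_apply_left]; exact hpq
    have e2 : (A.pos (t+1) (γ (t+1)) : ℕ) = (A.pos t p : ℕ) := by
      rw [h2, A.pos_succ hswap, Equiv.swap_apply_right]
    have c1' : min (A.pos (t+1) (γ t) : ℕ) (A.pos (t+1) (γ (t+1)) : ℕ)
        < (A.pos (t+1) x : ℕ) := by rw [← fin_min_val]; exact c1
    have c2' : (A.pos (t+1) x : ℕ)
        < max (A.pos (t+1) (γ t) : ℕ) (A.pos (t+1) (γ (t+1)) : ℕ) := by
      rw [← fin_max_val]; exact c2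
    omega
  · right
    rintro x - ⟨c1, c2⟩
    have e1 : (A.pos (t+1) (γ t) : ℕ) = (A.pos t p : ℕ) := by
      rw [h1, A.pos_succ hswap, Equiv.swap_apply_right]
    have e2 : (A.pos (t+1) (γ (t+1)) : ℕ) = (A.pos t p : ℕ) + 1 := by
      rw [h2, A.pos_succ hswap, Equiv.swap_apply_left]; exact hpq
    have c1' : min (A.pos (t+1) (γ t) : ℕ) (A.pos (t+1) (γ (t+1)) : ℕ)
        < (A.pos (t+1) x : ℕ) := by rw [← fin_min_val]; exact c1
    have c2' : (A.pos (t+1) x : ℕ)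
        < max (A.pos (t+1) (γ t) : ℕ) (A.pos (t+1) (γ (t+1)) : ℕ) := by
      rw [← fin_max_val]; exact c2
    omega

lemma kth_isBorder (A : AllowableSeq n) (blue : Fin n → Bool) {b k : ℕ} {γ : ℤ → Fin n}
    (hb : (univ.filter (fun x => blue x = true)).card = b)
    (hγ : A.IsKth (univ.filter (fun x => blue x = true)) k γ)
    (hk0 : 1 ≤ k) (h2k : 2 * k ≤ b) (δ : ℤ)
    (hge : ∀ t : ℤ, δ ≤ A.cweight blue γ t) : A.IsBorder blue δ γ := by
  refine ⟨fun t => A.kth_periodic hγ t, fun t => ?_,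
    Or.inl ⟨fun t => (mem_filter.mp (hγ t).1).2, hge, fun t => A.kth_condI hγ blue t⟩⟩
  show A.pos t (γ t) < A.pos t (γ (t - (n.choose 2 : ℤ)))
  exact A.kth_mirror hγ hk0 (by rw [hb]; exact h2k) t

lemma rho_isBorder (A : AllowableSeq n) (blue : Fin n → Bool) {b k : ℕ} {γ ρ : ℤ → Fin n}
    (hb : (univ.filter (fun x => blue x = true)).card = b)
    (hγ : A.IsKth (univ.filter (fun x => blue x = true)) k γ)
    (hk0 : 1 ≤ k) (h2k : 2 * k ≤ b) (δ : ℤ)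
    (hlt : ∀ t : ℤ, A.cweight blue γ t < δ)
    (hρ : RhoSpec A blue γ ρ) : A.IsBorder blue δ ρ := by
  refine ⟨fun t => A.rho_periodic hγ hρ t, fun t => ?_,
    Or.inr ⟨fun t => (hρ t).1, fun t => ?_, fun t => ?_⟩⟩
  · show A.pos t (ρ t) < A.pos t (ρ (t - (n.choose 2 : ℤ)))
    exact A.rho_mirror hγ hρ hk0 (by rw [hb]; exact h2k) t
  · have h1 := A.rho_cweight hρ t
    have h2 := hlt t
    omega
  · right
    rintro x hx ⟨c1, c2⟩
    exact A.rho_step hγ hρ t x hx (by rw [← fin_min_val]; exact c1)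
      (by rw [← fin_max_val]; exact c2)

lemma red_cnt_pos (A : AllowableSeq n) (blue : Fin n → Bool) {k δ : ℕ} {γ : ℤ → Fin n}
    (hγ : A.IsKth (univ.filter (fun x => blue x = true)) k γ)
    (hkδ : δ + 1 ≤ k) {t : ℤ} (hlt : A.cweight blue γ t < (δ : ℤ)) :
    0 < A.cnt (univ.filter (fun x => blue x = false)) t (γ t) := by
  have h1 := A.cweight_eq_cnt blue γ t
  have h2 := A.kth_cnt hγ t
  omega

lemma red_exists (A : AllowableSeq n) (blue : Fin n → Bool) {k δ : ℕ} {γ : ℤ → Fin n}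
    (hγ : A.IsKth (univ.filter (fun x => blue x = true)) k γ)
    (hkδ : δ + 1 ≤ k) {t : ℤ} (hlt : A.cweight blue γ t < (δ : ℤ)) :
    ∃ x : Fin n, blue x = false ∧ (A.pos t x : ℕ) < (A.pos t (γ t) : ℕ) := by
  obtain ⟨x, hx⟩ := card_pos.mp (A.red_cnt_pos blue hγ hkδ hlt)
  rw [mem_filter] at hx
  exact ⟨x, (mem_filter.mp hx.1).2, hx.2⟩

lemma rho_exists (A : AllowableSeq n) (blue : Fin n → Bool) {k δ : ℕ} {γ : ℤ → Fin n}
    (hγ : A.IsKth (univ.filter (fun x => blue x = true)) k γ)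
    (hkδ : δ + 1 ≤ k) (hlt : ∀ t : ℤ, A.cweight blue γ t < (δ : ℤ)) :
    ∃ ρ : ℤ → Fin n, RhoSpec A blue γ ρ := by
  have hne : ∀ t : ℤ, ((univ.filter (fun x => blue x = false)).filter
      (fun y => A.pos t y < A.pos t (γ t))).Nonempty :=
    fun t => card_pos.mp (A.red_cnt_pos blue hγ hkδ (hlt t))
  choose f hf hmax using fun t : ℤ =>
    Finset.exists_max_image _ (fun x : Fin n => (A.pos t x : ℕ)) (hne t)
  refine ⟨f, fun t => ?_⟩
  have h1 := hf t
  rw [mem_filter] at h1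
  refine ⟨(mem_filter.mp h1.1).2, h1.2, fun x hx hxlt => ?_⟩
  exact hmax t x (by rw [mem_filter]; exact ⟨by simp [hx], hxlt⟩)

end AllowableSeq

theorem borders_exist (n b r δ : ℕ) (A : AllowableSeq n) (blue : Fin n → Bool)
    (hn : n = b + r)
    (hb : (Finset.univ.filter (fun x => blue x = true)).card = b)
    (hr : (Finset.univ.filter (fun x => blue x = false)).card = r)
    (hbr : b = r + 2 * δ)
    (k : ℕ) (hk1 : δ + 1 ≤ k) (hk2 : k ≤ b / 2)
    (γ : ℤ → Fin n) (hγ : A.IsKth (Finset.univ.filter (fun x => blue x = true)) k γ)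
    (hpres : (∀ t : ℤ, (δ : ℤ) ≤ A.cweight blue γ t) ∨
             (∀ t : ℤ, A.cweight blue γ t < (δ : ℤ))) :
    (∃ γ' : ℤ → Fin n, A.IsBorder blue (δ : ℤ) γ') ∧
    ((∀ t : ℤ, (δ : ℤ) ≤ A.cweight blue γ t) → A.IsBorder blue (δ : ℤ) γ) ∧
    ((∀ t : ℤ, A.cweight blue γ t < (δ : ℤ)) →
      (∀ t : ℤ, ∃ x : Fin n, blue x = false ∧ A.pos t x < A.pos t (γ t)) ∧
      (∀ ρ : ℤ → Fin n,
        (∀ t : ℤ, blue (ρ t) = false ∧ A.pos t (ρ t) < A.pos t (γ t) ∧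
          ∀ x : Fin n, blue x = false → A.pos t x < A.pos t (γ t) →
            A.pos t x ≤ A.pos t (ρ t)) →
        A.IsBorder blue (δ : ℤ) ρ)) := by
  have hk0 : 1 ≤ k := by omega
  have h2k : 2 * k ≤ b := by omega
  have hRS : (∀ t : ℤ, A.cweight blue γ t < (δ : ℤ)) →
      ∀ ρ : ℤ → Fin n,
        (∀ t : ℤ, blue (ρ t) = false ∧ A.pos t (ρ t) < A.pos t (γ t) ∧
          ∀ x : Fin n, blue x = false → A.pos t x < A.pos t (γ t) →
            A.pos t x ≤ A.pos t (ρ t)) → A.RhoSpec blue γ ρ := by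
    intro _ ρ h t
    obtain ⟨h1, h2, h3⟩ := h t
    exact ⟨h1, h2, fun x hx hxl => h3 x hx hxl⟩
  refine ⟨?_, ?_, ?_⟩
  · rcases hpres with hge | hlt
    · exact ⟨γ, A.kth_isBorder blue hb hγ hk0 h2k (δ : ℤ) hge⟩
    · obtain ⟨ρ, hρ⟩ := A.rho_exists blue hγ hk1 hlt
      exact ⟨ρ, A.rho_isBorder blue hb hγ hk0 h2k (δ : ℤ) hlt hρ⟩
  · intro hge
    exact A.kth_isBorder blue hb hγ hk0 h2k (δ : ℤ) hge
  · intro hlt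
    refine ⟨fun t => ?_, fun ρ hρ => ?_⟩
    · obtain ⟨x, h1, h2⟩ := A.red_exists blue hγ hk1 (hlt t)
      exact ⟨x, h1, h2⟩
    · exact A.rho_isBorder blue hb hγ hk0 h2k (δ : ℤ) hlt (hRS hlt ρ hρ)
end

section
/- Let Γ be a blue curve that is ⪯-maximal among all borders, and let F consist of Γ(0) together with all blue points lying to the left of Γ(0) in π^0. Then for every j with 1 ≤ j ≤ |F| and every t with 0 ≤ t < C(n,2), if the weight of F_j is δ at time t and δ−1 at time t+1, then τ_{t+1} is a balanced transposition that swaps a point of F with a red point, moves the point of F to the right, and has exactly j−1 points of F strictly to the left of the transposed pair in π^t. -/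
open Finset

open AllowableSeq

section AuxCrossing

variable {n : ℕ}

private lemma pos_val_ne (A : AllowableSeq n) (u : ℤ) {x y : Fin n} (h : x ≠ y) :
    (A.pos u x : ℕ) ≠ (A.pos u y : ℕ) := by
  intro hv
  exact h ((A.pos u).injective (Fin.val_injective hv))

private lemma swap_step (A : AllowableSeq n) (t : ℤ) :
    ∃ p q : Fin n, p ≠ q ∧ (A.pos t q : ℕ) = (A.pos t p : ℕ) + 1 ∧
      A.pos (t + 1) = (Equiv.swap p q).trans (A.pos t) ∧
      (A.pos (t+1) p : ℕ) = (A.pos t p : ℕ) + 1 ∧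
      (A.pos (t+1) q : ℕ) = (A.pos t p : ℕ) ∧
      (∀ x : Fin n, x ≠ p → x ≠ q → A.pos (t+1) x = A.pos t x) := by
  obtain ⟨p, q, hq, hperm⟩ := A.adj t
  have hpq : p ≠ q := by
    intro h; rw [h] at hq; omega
  refine ⟨p, q, hpq, hq, hperm, ?_, ?_, ?_⟩
  · rw [hperm]
    show ((A.pos t) (Equiv.swap p q p) : ℕ) = _
    rw [Equiv.swap_apply_left]; exact hq
  · rw [hperm]
    show ((A.pos t) (Equiv.swap p q q) : ℕ) = _
    rw [Equiv.swap_apply_right]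
  · intro x hxp hxq
    rw [hperm]
    show (A.pos t) (Equiv.swap p q x) = _
    rw [Equiv.swap_apply_of_ne_of_ne hxp hxq]

private lemma cmp_pres (A : AllowableSeq n) (t : ℤ) {p q : Fin n}
    (hq : (A.pos t q : ℕ) = (A.pos t p : ℕ) + 1)
    (kp : (A.pos (t+1) p : ℕ) = (A.pos t p : ℕ) + 1)
    (kq : (A.pos (t+1) q : ℕ) = (A.pos t p : ℕ))
    (ko : ∀ x : Fin n, x ≠ p → x ≠ q → A.pos (t+1) x = A.pos t x)
    {a b : Fin n} (h1 : ¬(a = p ∧ b = q)) (h2 : ¬(a = q ∧ b = p)) :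
    (A.pos (t+1) b < A.pos (t+1) a ↔ A.pos t b < A.pos t a) := by
  simp only [Fin.lt_def]
  by_cases hab : a = b
  · rw [hab]; omega
  by_cases hap : a = p
  · have hbq : b ≠ q := fun h => h1 ⟨hap, h⟩
    have hbp : b ≠ p := fun h => hab (hap.trans h.symm)
    have e1 : A.pos (t+1) b = A.pos t b := ko b hbp hbq
    have d1 : (A.pos t b : ℕ) ≠ (A.pos t p : ℕ) := pos_val_ne A t hbp
    have d2 : (A.pos t b : ℕ) ≠ (A.pos t q : ℕ) := pos_val_ne A t hbq
    rw [hap, e1]; omega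
  by_cases haq : a = q
  · have hbp : b ≠ p := fun h => h2 ⟨haq, h⟩
    have hbq : b ≠ q := fun h => hab (haq.trans h.symm)
    have e1 : A.pos (t+1) b = A.pos t b := ko b hbp hbq
    have d1 : (A.pos t b : ℕ) ≠ (A.pos t p : ℕ) := pos_val_ne A t hbp
    have d2 : (A.pos t b : ℕ) ≠ (A.pos t q : ℕ) := pos_val_ne A t hbq
    rw [haq, e1]; omega
  · have e1 : A.pos (t+1) a = A.pos t a := ko a hap haq
    by_cases hbp : b = p
    · have d1 : (A.pos t a : ℕ) ≠ (A.pos t p : ℕ) := pos_val_ne A t hap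
      have d2 : (A.pos t a : ℕ) ≠ (A.pos t q : ℕ) := pos_val_ne A t haq
      rw [hbp, e1]; omega
    by_cases hbq : b = q
    · have d1 : (A.pos t a : ℕ) ≠ (A.pos t p : ℕ) := pos_val_ne A t hap
      have d2 : (A.pos t a : ℕ) ≠ (A.pos t q : ℕ) := pos_val_ne A t haq
      rw [hbq, e1]; omega
    · rw [e1, ko b hbp hbq]

/-- The set of pairs that are "inverted" at time `u` relative to time `u0`. -/
private def invSet (A : AllowableSeq n) (u0 u : ℤ) : Finset (Fin n × Fin n) :=
  Finset.univ.filter (fun ab => A.pos u0 ab.1 < A.pos u0 ab.2 ∧ A.pos u ab.2 < A.pos u ab.1)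

private lemma mem_invSet {A : AllowableSeq n} {u0 u : ℤ} {a b : Fin n} :
    (a, b) ∈ invSet A u0 u ↔ (A.pos u0 a < A.pos u0 b ∧ A.pos u b < A.pos u a) := by
  simp [invSet]

private lemma invSet_self (A : AllowableSeq n) (u0 : ℤ) : invSet A u0 u0 = ∅ := by
  ext ⟨a, b⟩
  simp only [mem_invSet, Finset.notMem_empty, iff_false, not_and]
  exact fun h h' => absurd h' (asymm h)

private lemma invSet_step (A : AllowableSeq n) (u0 u : ℤ) :
    ∃ e, invSet A u0 (u+1) ⊆ insert e (invSet A u0 u) ∧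
      invSet A u0 u ⊆ insert e (invSet A u0 (u+1)) := by
  obtain ⟨p, q, hpq, hq, hperm, kp, kq, ko⟩ := swap_step A u
  refine ⟨if A.pos u0 p < A.pos u0 q then (p, q) else (q, p), ?_, ?_⟩
  · rintro ⟨a, b⟩ hab
    rw [mem_invSet] at hab
    obtain ⟨h0, hlt⟩ := hab
    rw [Finset.mem_insert]
    by_cases h1 : a = p ∧ b = q
    · obtain ⟨rfl, rfl⟩ := h1
      left; rw [if_pos h0]
    by_cases h2 : a = q ∧ b = p
    · obtain ⟨rfl, rfl⟩ := h2
      left; rw [if_neg (asymm h0)]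
    · right; rw [mem_invSet]
      exact ⟨h0, (cmp_pres A u hq kp kq ko h1 h2).mp hlt⟩
  · rintro ⟨a, b⟩ hab
    rw [mem_invSet] at hab
    obtain ⟨h0, hlt⟩ := hab
    rw [Finset.mem_insert]
    by_cases h1 : a = p ∧ b = q
    · obtain ⟨rfl, rfl⟩ := h1
      left; rw [if_pos h0]
    by_cases h2 : a = q ∧ b = p
    · obtain ⟨rfl, rfl⟩ := h2
      left; rw [if_neg (asymm h0)]
    · right; rw [mem_invSet]
      exact ⟨h0, (cmp_pres A u hq kp kq ko h1 h2).mpr hlt⟩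

private lemma invSet_card_succ_le (A : AllowableSeq n) (u0 u : ℤ) :
    (invSet A u0 (u+1)).card ≤ (invSet A u0 u).card + 1 := by
  obtain ⟨e, h1, _⟩ := invSet_step A u0 u
  calc (invSet A u0 (u+1)).card ≤ (insert e (invSet A u0 u)).card := Finset.card_le_card h1
    _ ≤ (invSet A u0 u).card + 1 := Finset.card_insert_le _ _

private lemma invSet_card_le_add (A : AllowableSeq n) (u0 u : ℤ) (j : ℕ) :
    (invSet A u0 (u + j)).card ≤ (invSet A u0 u).card + j := by
  induction j with
  | zero => simp
  | succ k ih =>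
    have harg : (u + ((k+1 : ℕ) : ℤ)) = (u + k) + 1 := by push_cast; ring
    rw [harg]
    have := invSet_card_succ_le A u0 (u + k)
    omega

private lemma card_lt_pairs : (Finset.univ.filter
    (fun ab : Fin n × Fin n => ab.1 < ab.2)).card = n.choose 2 := by
  classical
  set L := Finset.univ.filter (fun ab : Fin n × Fin n => ab.1 < ab.2) with hL
  set G := Finset.univ.filter (fun ab : Fin n × Fin n => ab.2 < ab.1) with hG
  set D := Finset.univ.filter (fun ab : Fin n × Fin n => ab.1 = ab.2) with hD
  have hLG : L.card = G.card := by
    apply Finset.card_bij (fun ab _ => (ab.2, ab.1))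
    · rintro ⟨a, b⟩ hab
      simp only [hL, hG, Finset.mem_filter, Finset.mem_univ, true_and] at *
      exact hab
    · rintro ⟨a, b⟩ ha ⟨c, d⟩ hc h
      simp only [Prod.mk.injEq] at h
      exact Prod.ext h.2 h.1
    · rintro ⟨a, b⟩ hab
      refine ⟨(b, a), ?_, rfl⟩
      simp only [hL, hG, Finset.mem_filter, Finset.mem_univ, true_and] at *
      exact hab
  have hDcard : D.card = n := by
    have : D = Finset.univ.image (fun a : Fin n => (a, a)) := by
      ext ⟨a, b⟩
      simp only [hD, Finset.mem_filter, Finset.mem_univ, true_and, Finset.mem_image,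
        Prod.mk.injEq]
      constructor
      · rintro rfl; exact ⟨a, rfl, rfl⟩
      · rintro ⟨c, rfl, rfl⟩; rfl
    rw [this, Finset.card_image_of_injective _
        (fun a b h => by rw [Prod.mk.injEq] at h; exact h.1),
      Finset.card_univ, Fintype.card_fin]
  have hsplit : L.card + (G.card + D.card) = n * n := by
    have h1 : L.card + (Finset.univ.filter
        (fun ab : Fin n × Fin n => ¬ ab.1 < ab.2)).card = (Finset.univ : Finset (Fin n × Fin n)).card := by
      rw [hL]; exact Finset.card_filter_add_card_filter_not _
    have h2 : (Finset.univ.filter (fun ab : Fin n × Fin n => ¬ ab.1 < ab.2)) = G ∪ D := by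
      ext ⟨a, b⟩
      simp only [hG, hD, Finset.mem_filter, Finset.mem_univ, true_and, Finset.mem_union, not_lt]
      constructor
      · intro h; rcases lt_or_eq_of_le h with h' | h'
        · exact Or.inl h'
        · exact Or.inr h'.symm
      · rintro (h | h)
        · exact le_of_lt h
        · exact le_of_eq h.symm
    have h3 : Disjoint G D := by
      rw [Finset.disjoint_filter]
      rintro ⟨a, b⟩ _ h h'
      exact absurd h (by simp_all)
    rw [h2, Finset.card_union_of_disjoint h3] at h1
    simpa [Finset.card_univ] using h1
  have hnn : n * (n - 1) = n * n - n := by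
    cases n with
    | zero => simp
    | succ m => rw [Nat.succ_sub_one, Nat.mul_succ]; omega
  have h2L : L.card * 2 = n * (n - 1) := by
    rw [hnn]; omega
  rw [Nat.choose_two_right]
  omega

private lemma invSet_card_full (A : AllowableSeq n) (u0 : ℤ) :
    (invSet A u0 (u0 + (n.choose 2 : ℤ))).card = n.choose 2 := by
  classical
  have hrev : ∀ x : Fin n, A.pos (u0 + (n.choose 2 : ℤ)) x = (A.pos u0 x).rev := by
    intro x; rw [A.rev u0]; rfl
  have hset : invSet A u0 (u0 + (n.choose 2 : ℤ)) =
      Finset.univ.filter (fun ab : Fin n × Fin n => A.pos u0 ab.1 < A.pos u0 ab.2) := by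
    ext ⟨a, b⟩
    rw [mem_invSet, Finset.mem_filter]
    simp only [Finset.mem_univ, true_and, hrev, Fin.rev_lt_rev]
    exact and_self_iff
  rw [hset]
  have : (Finset.univ.filter (fun ab : Fin n × Fin n => A.pos u0 ab.1 < A.pos u0 ab.2)).card =
      (Finset.univ.filter (fun ab : Fin n × Fin n => ab.1 < ab.2)).card := by
    apply Finset.card_bij (fun ab _ => (A.pos u0 ab.1, A.pos u0 ab.2))
    · rintro ⟨a, b⟩ hab
      simp only [Finset.mem_filter, Finset.mem_univ, true_and] at *
      exact hab
    · rintro ⟨a, b⟩ _ ⟨c, d⟩ _ h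
      simp only [Prod.mk.injEq] at h
      exact Prod.ext ((A.pos u0).injective h.1) ((A.pos u0).injective h.2)
    · rintro ⟨a, b⟩ hab
      refine ⟨((A.pos u0).symm a, (A.pos u0).symm b), ?_, by simp⟩
      simp only [Finset.mem_filter, Finset.mem_univ, true_and, Equiv.apply_symm_apply] at *
      exact hab
  rw [this, card_lt_pairs]

private lemma invSet_card_eq (A : AllowableSeq n) (u0 : ℤ) {k : ℕ} (hk : k ≤ n.choose 2) :
    (invSet A u0 (u0 + k)).card = k := by
  have h1 : (invSet A u0 (u0 + k)).card ≤ k := by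
    have := invSet_card_le_add A u0 u0 k
    rwa [invSet_self, Finset.card_empty, zero_add] at this
  have h2 : n.choose 2 ≤ (invSet A u0 (u0 + k)).card + (n.choose 2 - k) := by
    have := invSet_card_le_add A u0 (u0 + k) (n.choose 2 - k)
    have harg : (u0 + k) + ((n.choose 2 - k : ℕ) : ℤ) = u0 + (n.choose 2 : ℤ) := by
      push_cast [Nat.cast_sub hk]; ring
    rw [harg, invSet_card_full] at this
    exact this
  omega

private lemma invSet_mono_succ (A : AllowableSeq n) (u0 : ℤ) {m : ℕ} (hm : m + 1 ≤ n.choose 2) :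
    invSet A u0 (u0 + m) ⊆ invSet A u0 (u0 + (m+1 : ℕ)) := by
  obtain ⟨e, hs1, hs2⟩ := invSet_step A u0 (u0 + m)
  have harg : (u0 + ((m+1 : ℕ) : ℤ)) = (u0 + m) + 1 := by push_cast; ring
  rw [harg]
  have c1 : (invSet A u0 (u0 + m)).card = m := invSet_card_eq A u0 (by omega)
  have c2 : (invSet A u0 ((u0 + m) + 1)).card = m + 1 := by
    rw [← harg]; exact invSet_card_eq A u0 hm
  intro x hx
  by_contra hxB
  have hxe : x = e := by
    have := hs2 hx
    rw [Finset.mem_insert] at this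
    tauto
  have heA : e ∈ invSet A u0 (u0 + m) := hxe ▸ hx
  have hsub : invSet A u0 ((u0 + m) + 1) ⊆ invSet A u0 (u0 + m) := by
    intro y hy
    have := hs1 hy
    rw [Finset.mem_insert] at this
    rcases this with rfl | h
    · exact heA
    · exact h
  have := Finset.card_le_card hsub
  omega

private lemma invSet_mono (A : AllowableSeq n) (u0 : ℤ) {k l : ℕ} (hkl : k ≤ l)
    (hl : l ≤ n.choose 2) : invSet A u0 (u0 + k) ⊆ invSet A u0 (u0 + l) := by
  induction l with
  | zero =>
    have : k = 0 := by omega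
    rw [this]
  | succ m ih =>
    rcases Nat.eq_or_lt_of_le hkl with h | h
    · rw [h]
    · exact (ih (by omega) (by omega)).trans (invSet_mono_succ A u0 hl)

/-- Once a pair has crossed (relative to time `u0`), it stays crossed throughout the
half-period `[u0, u0 + C(n,2)]`. -/
private lemma crossed_mono (A : AllowableSeq n) (u0 : ℤ) {a b : Fin n}
    (h0 : A.pos u0 a < A.pos u0 b) {k l : ℕ} (hkl : k ≤ l) (hlN : l ≤ n.choose 2)
    (hc : A.pos (u0 + k) b < A.pos (u0 + k) a) :
    A.pos (u0 + l) b < A.pos (u0 + l) a := by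
  have hm := invSet_mono A u0 hkl hlN (mem_invSet.mpr ⟨h0, hc⟩)
  exact (mem_invSet.mp hm).2

end AuxCrossing

section AuxMain

variable {n : ℕ}

private lemma cweight_eq_sum (A : AllowableSeq n) (blue : Fin n → Bool) (γ : ℤ → Fin n)
    (u : ℤ) : A.cweight blue γ u
      = ∑ x : Fin n, if (A.pos u x : ℕ) < (A.pos u (γ u) : ℕ) then wt blue x else 0 :=
  Finset.sum_congr rfl fun x _ => if_congr Fin.lt_def rfl rfl

private lemma sum_lt_congr (A : AllowableSeq n) (blue : Fin n → Bool) {u u' : ℤ} {c c' : ℕ}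
    (h : ∀ x : Fin n, ((A.pos u x : ℕ) < c ↔ (A.pos u' x : ℕ) < c')) :
    (∑ x : Fin n, if (A.pos u x : ℕ) < c then wt blue x else 0)
      = ∑ x : Fin n, if (A.pos u' x : ℕ) < c' then wt blue x else 0 :=
  Finset.sum_congr rfl fun x _ => if_congr (h x) rfl rfl

private lemma sum_lt_split (A : AllowableSeq n) (blue : Fin n → Bool) (u : ℤ) (c : ℕ)
    (y : Fin n) (hy : (A.pos u y : ℕ) = c) :
    (∑ x : Fin n, if (A.pos u x : ℕ) < c + 1 then wt blue x else 0)
      = (∑ x : Fin n, if (A.pos u x : ℕ) < c then wt blue x else 0) + wt blue y := by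
  classical
  have hsplit : ∀ x : Fin n, (if (A.pos u x : ℕ) < c + 1 then wt blue x else 0)
      = (if (A.pos u x : ℕ) < c then wt blue x else 0)
        + (if x = y then wt blue x else 0) := by
    intro x
    by_cases hxy : x = y
    · subst hxy; simp [hy]
    · have hne : (A.pos u x : ℕ) ≠ c := by rw [← hy]; exact pos_val_ne A u hxy
      rw [if_neg hxy, add_zero, if_congr (show ((A.pos u x : ℕ) < c + 1) ↔ ((A.pos u x : ℕ) < c)
        by omega) rfl rfl]
  rw [Finset.sum_congr rfl fun x _ => hsplit x, Finset.sum_add_distrib,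
    Finset.sum_ite_eq' Finset.univ y (fun x => wt blue x)]
  simp

private lemma filter_lt_split (A : AllowableSeq n) (F : Finset (Fin n)) (u : ℤ) (c : ℕ)
    (y0 : Fin n) (hy0 : (A.pos u y0 : ℕ) = c) (hy0F : y0 ∈ F) :
    F.filter (fun y => (A.pos u y : ℕ) < c + 1)
      = insert y0 (F.filter (fun y => (A.pos u y : ℕ) < c)) := by
  ext y
  simp only [Finset.mem_insert, Finset.mem_filter]
  by_cases hxy : y = y0
  · subst hxy; simp [hy0, hy0F]
  · have hne : (A.pos u y : ℕ) ≠ c := by rw [← hy0]; exact pos_val_ne A u hxy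
    constructor
    · rintro ⟨h1, h2⟩; exact Or.inr ⟨h1, by omega⟩
    · rintro (h | ⟨h1, h2⟩)
      · exact absurd h hxy
      · exact ⟨h1, by omega⟩

private lemma card_left_strict (A : AllowableSeq n) (F : Finset (Fin n)) (u : ℤ)
    {y z : Fin n} (hy : y ∈ F) (hlt : (A.pos u y : ℕ) < (A.pos u z : ℕ)) :
    (F.filter (fun x => (A.pos u x : ℕ) < (A.pos u y : ℕ))).card
      < (F.filter (fun x => (A.pos u x : ℕ) < (A.pos u z : ℕ))).card := by
  apply Finset.card_lt_card
  have hsub : F.filter (fun x => (A.pos u x : ℕ) < (A.pos u y : ℕ))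
      ⊆ F.filter (fun x => (A.pos u x : ℕ) < (A.pos u z : ℕ)) := by
    intro x hx
    rw [Finset.mem_filter] at *
    exact ⟨hx.1, by omega⟩
  have hymem : y ∈ F.filter (fun x => (A.pos u x : ℕ) < (A.pos u z : ℕ)) :=
    Finset.mem_filter.mpr ⟨hy, hlt⟩
  have hynot : y ∉ F.filter (fun x => (A.pos u x : ℕ) < (A.pos u y : ℕ)) := fun h =>
    lt_irrefl _ (Finset.mem_filter.mp h).2
  rw [Finset.ssubset_def]
  exact ⟨hsub, fun h => hynot (h hymem)⟩

private lemma kth_unique (A : AllowableSeq n) (F : Finset (Fin n)) (u : ℤ) {y z : Fin n}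
    (hy : y ∈ F) (hz : z ∈ F)
    (h : (F.filter (fun x => (A.pos u x : ℕ) < (A.pos u y : ℕ))).card
       = (F.filter (fun x => (A.pos u x : ℕ) < (A.pos u z : ℕ))).card) : y = z := by
  rcases lt_trichotomy ((A.pos u y : ℕ)) ((A.pos u z : ℕ)) with h' | h' | h'
  · exact absurd h (Nat.ne_of_lt (card_left_strict A F u hy h'))
  · exact (A.pos u).injective (Fin.val_injective h')
  · exact absurd h.symm (Nat.ne_of_lt (card_left_strict A F u hz h'))

private lemma card_natify (A : AllowableSeq n) (F : Finset (Fin n)) (u : ℤ) (z : Fin n) :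
    (F.filter (fun x => A.pos u x < A.pos u z)).card
      = (F.filter (fun x => (A.pos u x : ℕ) < (A.pos u z : ℕ))).card := by
  congr 1

private lemma wt_of_true {n : ℕ} (blue : Fin n → Bool) {x : Fin n} (h : blue x = true) :
    wt blue x = 1 := by
  unfold wt; rw [if_pos h]

private lemma wt_eq_neg_one {n : ℕ} (blue : Fin n → Bool) {x : Fin n} (h : wt blue x = -1) :
    blue x = false := by
  by_contra hb
  rw [Bool.not_eq_false] at hb
  unfold wt at h
  rw [if_pos hb] at h
  omega

private lemma wt_eq_one {n : ℕ} (blue : Fin n → Bool) {x : Fin n} (h : wt blue x = 1) :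
    blue x = true := by
  by_contra hb
  rw [Bool.not_eq_true] at hb
  unfold wt at h
  rw [if_neg (by rw [hb]; exact Bool.false_ne_true)] at h
  omega

end AuxMain

theorem Fj_down_change_balanced (n b r δ : ℕ) (A : AllowableSeq n) (blue : Fin n → Bool)
    (hn : n = b + r)
    (hb : (Finset.univ.filter (fun x => blue x = true)).card = b)
    (hr : (Finset.univ.filter (fun x => blue x = false)).card = r)
    (hbr : b = r + 2 * δ)
    (Γ : ℤ → Fin n) (hΓblue : ∀ t : ℤ, blue (Γ t) = true)
    (hΓ : A.IsMaxBorder blue (δ : ℤ) Γ)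
    (F : Finset (Fin n))
    (hF : F = Finset.univ.filter (fun x => blue x = true ∧ A.pos 0 x ≤ A.pos 0 (Γ 0)))
    (j : ℕ) (hj1 : 1 ≤ j) (hj2 : j ≤ F.card)
    (γ : ℤ → Fin n) (hγ : A.IsKth F j γ)
    (t : ℤ) (ht0 : 0 ≤ t) (htN : t < (n.choose 2 : ℤ))
    (h1 : A.cweight blue γ t = (δ : ℤ)) (h2 : A.cweight blue γ (t+1) = (δ : ℤ) - 1) :
    ∃ f x : Fin n, f ∈ F ∧ blue x = false ∧ A.SwapsAt t f x ∧
      (A.pos t x : ℕ) = (A.pos t f : ℕ) + 1 ∧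
      A.BalancedSwap blue (δ : ℤ) t f x ∧
      (F.filter (fun y =>
        (A.pos t y : ℕ) < min (A.pos t f : ℕ) (A.pos t x : ℕ))).card = j - 1 := by
  classical
  obtain ⟨p, q, hpq, hq, hperm, kp, kq, ko⟩ := swap_step A t
  have hFblue : ∀ y ∈ F, blue y = true := by
    intro y hy; rw [hF] at hy; exact (Finset.mem_filter.mp hy).2.1
  have hFpos : ∀ y ∈ F, A.pos 0 y ≤ A.pos 0 (Γ 0) := by
    intro y hy; rw [hF] at hy; exact (Finset.mem_filter.mp hy).2.2
  obtain ⟨hfF, hcard_t⟩ := hγ t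
  obtain ⟨hgF, hcard_t1⟩ := hγ (t+1)
  rw [cweight_eq_sum] at h1 h2
  rw [card_natify] at hcard_t hcard_t1
  -- transfer of `<`-conditions between times t and t+1, for thresholds ≠ i+1
  have key : ∀ c : ℕ, c ≠ (A.pos t p : ℕ) + 1 →
      ∀ x : Fin n, ((A.pos (t+1) x : ℕ) < c ↔ (A.pos t x : ℕ) < c) := by
    intro c hc x
    by_cases hxp : x = p
    · subst hxp; omega
    by_cases hxq : x = q
    · subst hxq; omega
    · rw [ko x hxp hxq]
  by_cases hfp : γ t = p
  · by_cases hqF : q ∈ F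
    · -- both swapped points in F : the weight cannot change, contradiction
      exfalso
      have e1 : F.filter (fun y => (A.pos (t+1) y : ℕ) < (A.pos (t+1) q : ℕ))
          = F.filter (fun y => (A.pos t y : ℕ) < (A.pos t p : ℕ)) := by
        rw [kq]
        exact Finset.filter_congr fun y _ => key _ (by omega) y
      have hγ1 : γ (t+1) = q := by
        apply kth_unique A F (t+1) hgF hqF
        rw [hcard_t1, e1]
        rw [hfp] at hcard_t
        exact hcard_t.symm
      rw [hγ1, kq] at h2
      rw [sum_lt_congr A blue (fun x => key _ (by omega) x)] at h2
      rw [hfp] at h1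
      omega
    · -- the conclusion case : γ t = p swaps with a red point q on its right
      have e1 : F.filter (fun y => (A.pos (t+1) y : ℕ) < (A.pos (t+1) p : ℕ))
          = F.filter (fun y => (A.pos t y : ℕ) < (A.pos t p : ℕ)) := by
        apply Finset.filter_congr
        intro y hy
        have hyq : y ≠ q := fun h => hqF (h ▸ hy)
        rw [kp]
        by_cases hyp : y = p
        · subst hyp; omega
        · rw [ko y hyp hyq]
          have := pos_val_ne A t hyp
          omega
      have hγ1 : γ (t+1) = p := by
        apply kth_unique A F (t+1) hgF (hfp ▸ hfF)
        rw [hcard_t1, e1]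
        rw [hfp] at hcard_t
        exact hcard_t.symm
      rw [hγ1, kp] at h2
      rw [sum_lt_split A blue (t+1) (A.pos t p : ℕ) q kq] at h2
      rw [sum_lt_congr A blue (fun x => key _ (by omega) x)] at h2
      rw [hfp] at h1
      have hwq : wt blue q = -1 := by omega
      have hbq : blue q = false := wt_eq_neg_one blue hwq
      have hbp : blue p = true := hFblue p (hfp ▸ hfF)
      have hminpq : min (A.pos t p : ℕ) (A.pos t q : ℕ) = (A.pos t p : ℕ) := by omega
      refine ⟨p, q, hfp ▸ hfF, hbq, ⟨hpq, hperm⟩, hq, ⟨⟨hpq, hperm⟩, ?_, ?_⟩, ?_⟩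
      · rw [hbp, hbq]; simp
      · rw [hminpq]; exact h1
      · rw [hminpq]
        rw [hfp] at hcard_t
        exact hcard_t
  · by_cases hfq : γ t = q
    · by_cases hpF : p ∈ F
      · -- both swapped points in F : the weight cannot change, contradiction
        exfalso
        have hqF : q ∈ F := hfq ▸ hfF
        have eB : F.filter (fun y => (A.pos (t+1) y : ℕ) < (A.pos t p : ℕ))
            = F.filter (fun y => (A.pos t y : ℕ) < (A.pos t p : ℕ)) :=
          Finset.filter_congr fun y _ => key _ (by omega) y
        have eA : F.filter (fun y => (A.pos (t+1) y : ℕ) < (A.pos t p : ℕ) + 1)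
            = insert q (F.filter (fun y => (A.pos (t+1) y : ℕ) < (A.pos t p : ℕ))) :=
          filter_lt_split A F (t+1) _ q kq hqF
        have eC : F.filter (fun y => (A.pos t y : ℕ) < (A.pos t p : ℕ) + 1)
            = insert p (F.filter (fun y => (A.pos t y : ℕ) < (A.pos t p : ℕ))) :=
          filter_lt_split A F t _ p rfl hpF
        have hqS : q ∉ F.filter (fun y => (A.pos (t+1) y : ℕ) < (A.pos t p : ℕ)) := by
          intro h
          have := (Finset.mem_filter.mp h).2
          omega
        have hpS0 : p ∉ F.filter (fun y => (A.pos t y : ℕ) < (A.pos t p : ℕ)) := by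
          intro h
          have := (Finset.mem_filter.mp h).2
          omega
        have c1 : (F.filter (fun y => (A.pos (t+1) y : ℕ) < (A.pos (t+1) p : ℕ))).card
            = j - 1 := by
          rw [kp, eA, Finset.card_insert_of_notMem hqS, eB]
          rw [hfq, hq] at hcard_t
          rw [eC, Finset.card_insert_of_notMem hpS0] at hcard_t
          omega
        have hγ1 : γ (t+1) = p := by
          apply kth_unique A F (t+1) hgF hpF
          rw [hcard_t1, c1]
        rw [hγ1, kp] at h2
        rw [sum_lt_split A blue (t+1) (A.pos t p : ℕ) q kq] at h2
        rw [sum_lt_congr A blue (fun x => key _ (by omega) x)] at h2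
        rw [hfq, hq, sum_lt_split A blue t (A.pos t p : ℕ) p rfl] at h1
        have hbp : blue p = true := hFblue p hpF
        have hbq : blue q = true := hFblue q hqF
        rw [wt_of_true blue hbp] at h1
        rw [wt_of_true blue hbq] at h2
        omega
      · -- a blue point outside F just left of γ t : impossible by the crossing argument
        exfalso
        have e1 : F.filter (fun y => (A.pos (t+1) y : ℕ) < (A.pos (t+1) q : ℕ))
            = F.filter (fun y => (A.pos t y : ℕ) < (A.pos t q : ℕ)) := by
          apply Finset.filter_congr
          intro y hy
          have hyp : y ≠ p := fun h => hpF (h ▸ hy)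
          rw [kq, hq]
          by_cases hyq : y = q
          · subst hyq; omega
          · rw [ko y hyp hyq]
            have := pos_val_ne A t hyp
            omega
        have hγ1 : γ (t+1) = q := by
          apply kth_unique A F (t+1) hgF (hfq ▸ hfF)
          rw [hcard_t1, e1]
          rw [hfq] at hcard_t
          exact hcard_t.symm
        rw [hγ1, kq] at h2
        rw [sum_lt_congr A blue (fun x => key _ (by omega) x)] at h2
        rw [hfq, hq, sum_lt_split A blue t (A.pos t p : ℕ) p rfl] at h1
        have hwp : wt blue p = 1 := by omega
        have hbp : blue p = true := wt_eq_one blue hwp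
        -- p is blue but not in F, so at time 0 it lies strictly right of Γ 0, hence of γ t
        have hΓp : A.pos 0 (Γ 0) < A.pos 0 p := by
          by_contra hle
          push_neg at hle
          exact hpF (by rw [hF]; exact Finset.mem_filter.mpr ⟨Finset.mem_univ p, hbp, hle⟩)
        have h0lt : A.pos 0 (γ t) < A.pos 0 p := lt_of_le_of_lt (hFpos _ hfF) hΓp
        -- at time t+1-N, p is strictly left of γ t (by the reversal)
        have hu0 : A.pos (t + 1 - (n.choose 2 : ℤ)) p
            < A.pos (t + 1 - (n.choose 2 : ℤ)) (γ t) := by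
          have hrev : ∀ x : Fin n, A.pos (t+1) x = (A.pos (t + 1 - (n.choose 2 : ℤ)) x).rev := by
            intro x
            have h' := A.rev (t + 1 - (n.choose 2 : ℤ))
            rw [show t + 1 - (n.choose 2 : ℤ) + (n.choose 2 : ℤ) = t + 1 by ring] at h'
            rw [h']; rfl
          have hlt1 : A.pos (t+1) (γ t) < A.pos (t+1) p := by
            rw [Fin.lt_def, kp, hfq, kq]; omega
          rw [hrev, hrev, Fin.rev_lt_rev] at hlt1
          exact hlt1
        obtain ⟨tn, htn⟩ : ∃ tn : ℕ, (tn : ℤ) = t := ⟨t.toNat, Int.toNat_of_nonneg ht0⟩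
        have htnN : tn < n.choose 2 := by
          have := htN
          omega
        have hk0 : t + 1 - (n.choose 2 : ℤ) + ((n.choose 2 - 1 - tn : ℕ) : ℤ) = 0 := by omega
        have hl0 : t + 1 - (n.choose 2 : ℤ) + ((n.choose 2 - 1 : ℕ) : ℤ) = t := by omega
        have hcross := crossed_mono A (t + 1 - (n.choose 2 : ℤ)) hu0
          (k := n.choose 2 - 1 - tn) (l := n.choose 2 - 1) (by omega) (by omega)
          (by rw [hk0]; exact h0lt)
        rw [hl0] at hcross
        rw [Fin.lt_def, hfq, hq] at hcross
        omega
    · -- γ t is not involved in the swap : the weight cannot change, contradiction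
      exfalso
      have hval : A.pos (t+1) (γ t) = A.pos t (γ t) := ko _ hfp hfq
      have hne1 : (A.pos t (γ t) : ℕ) ≠ (A.pos t p : ℕ) := pos_val_ne A t hfp
      have hne2 : (A.pos t (γ t) : ℕ) ≠ (A.pos t q : ℕ) := pos_val_ne A t hfq
      have e1 : F.filter (fun y => (A.pos (t+1) y : ℕ) < (A.pos (t+1) (γ t) : ℕ))
          = F.filter (fun y => (A.pos t y : ℕ) < (A.pos t (γ t) : ℕ)) := by
        rw [hval]
        exact Finset.filter_congr fun y _ => key _ (by omega) y
      have hγ1 : γ (t+1) = γ t := by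
        apply kth_unique A F (t+1) hgF hfF
        rw [hcard_t1, e1, hcard_t]
      rw [hγ1, hval] at h2
      rw [sum_lt_congr A blue (fun x => key _ (by omega) x)] at h2
      omega
end

section
/- Let Γ be a blue curve that is ⪯-maximal among all borders, let Γ̄ be its mirror curve, and let H consist of Γ̄(0) together with all blue points lying to the right of Γ̄(0) in π^0. Then for every i with 1 ≤ i ≤ |H| and every t with 0 ≤ t < C(n,2), if the weight of H_i is δ−1 at time t and δ at time t+1, then τ_{t+1} is a balanced transposition that swaps a point of H with a red point, moves the point of H to the left, and has exactly i−1 points of H strictly to the left of the transposed pair in π^t. -/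
open Finset

namespace AllowableSeq

variable {n : ℕ}

/-- The left point of the adjacent pair swapped by `τ_{s+1}`. -/
noncomputable def sp (A : AllowableSeq n) (s : ℤ) : Fin n := (A.adj s).choose

/-- The right point of the adjacent pair swapped by `τ_{s+1}`. -/
noncomputable def sq (A : AllowableSeq n) (s : ℤ) : Fin n := (A.adj s).choose_spec.choose

lemma sq_pos (A : AllowableSeq n) (s : ℤ) :
    (A.pos s (A.sq s) : ℕ) = (A.pos s (A.sp s) : ℕ) + 1 :=
  (A.adj s).choose_spec.choose_spec.1

lemma pos_succ_s17 (A : AllowableSeq n) (s : ℤ) :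
    A.pos (s + 1) = (Equiv.swap (A.sp s) (A.sq s)).trans (A.pos s) :=
  (A.adj s).choose_spec.choose_spec.2

lemma pos_succ_apply (A : AllowableSeq n) (s : ℤ) (x : Fin n) :
    A.pos (s + 1) x = A.pos s (Equiv.swap (A.sp s) (A.sq s) x) := by
  rw [A.pos_succ_s17 s]; rfl

lemma pos_inj (A : AllowableSeq n) {s : ℤ} {x y : Fin n}
    (h : (A.pos s x : ℕ) = (A.pos s y : ℕ)) : x = y :=
  (A.pos s).injective (Fin.val_injective h)

lemma sp_ne_sq (A : AllowableSeq n) (s : ℤ) : A.sp s ≠ A.sq s := by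
  intro h
  have h2 := A.sq_pos s
  rw [h] at h2
  omega

lemma pos_succ_sp (A : AllowableSeq n) (s : ℤ) :
    (A.pos (s + 1) (A.sp s) : ℕ) = (A.pos s (A.sp s) : ℕ) + 1 := by
  rw [A.pos_succ_apply, Equiv.swap_apply_left, A.sq_pos]

lemma pos_succ_sq (A : AllowableSeq n) (s : ℤ) :
    (A.pos (s + 1) (A.sq s) : ℕ) = (A.pos s (A.sp s) : ℕ) := by
  rw [A.pos_succ_apply, Equiv.swap_apply_right]

lemma pos_succ_other (A : AllowableSeq n) {s : ℤ} {x : Fin n}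
    (hp : x ≠ A.sp s) (hq : x ≠ A.sq s) : A.pos (s + 1) x = A.pos s x := by
  rw [A.pos_succ_apply, Equiv.swap_apply_of_ne_of_ne hp hq]

/-- Crossing a threshold `m ≠ k+1` is invariant under one step. -/
lemma setshift (A : AllowableSeq n) {s : ℤ} {m : ℕ}
    (hm : m ≠ (A.pos s (A.sp s) : ℕ) + 1) (x : Fin n) :
    ((A.pos (s + 1) x : ℕ) < m ↔ (A.pos s x : ℕ) < m) := by
  by_cases hp : x = A.sp s
  · subst hp
    rw [A.pos_succ_sp]
    omega
  by_cases hq : x = A.sq s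
  · subst hq
    rw [A.pos_succ_sq, A.sq_pos]
    omega
  · rw [A.pos_succ_other hp hq]

/-- The relative order of a pair can change at a step only if the pair is swapped there. -/
lemma noflip (A : AllowableSeq n) {s : ℤ} {u v : Fin n}
    (h1 : ¬(u = A.sp s ∧ v = A.sq s)) (h2 : ¬(u = A.sq s ∧ v = A.sp s)) :
    ((A.pos (s + 1) u : ℕ) < (A.pos (s + 1) v : ℕ) ↔
      (A.pos s u : ℕ) < (A.pos s v : ℕ)) := by
  have hk := A.sq_pos s
  by_cases hup : u = A.sp s
  · subst hup
    by_cases hvp : v = A.sp s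
    · subst hvp; omega
    by_cases hvq : v = A.sq s
    · exact absurd ⟨rfl, hvq⟩ h1
    · have hv1 : (A.pos s v : ℕ) ≠ (A.pos s (A.sp s) : ℕ) := fun h => hvp (A.pos_inj h)
      have hv2 : (A.pos s v : ℕ) ≠ (A.pos s (A.sp s) : ℕ) + 1 := by
        intro hx; exact hvq (A.pos_inj (s := s) (x := v) (y := A.sq s) (by omega))
      rw [A.pos_succ_sp, A.pos_succ_other hvp hvq]
      omega
  by_cases huq : u = A.sq s
  · subst huq
    by_cases hvq : v = A.sq s
    · subst hvq; omega
    by_cases hvp : v = A.sp s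
    · exact absurd ⟨rfl, hvp⟩ h2
    · have hv1 : (A.pos s v : ℕ) ≠ (A.pos s (A.sp s) : ℕ) := fun h => hvp (A.pos_inj h)
      have hv2 : (A.pos s v : ℕ) ≠ (A.pos s (A.sp s) : ℕ) + 1 := by
        intro hx; exact hvq (A.pos_inj (s := s) (x := v) (y := A.sq s) (by omega))
      rw [A.pos_succ_sq, A.pos_succ_other hvp hvq]
      omega
  · have hu1 : (A.pos s u : ℕ) ≠ (A.pos s (A.sp s) : ℕ) := fun h => hup (A.pos_inj h)
    have hu2 : (A.pos s u : ℕ) ≠ (A.pos s (A.sp s) : ℕ) + 1 := by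
      intro hx; exact huq (A.pos_inj (s := s) (x := u) (y := A.sq s) (by omega))
    rw [A.pos_succ_other hup huq]
    by_cases hvp : v = A.sp s
    · subst hvp; rw [A.pos_succ_sp]; omega
    by_cases hvq : v = A.sq s
    · subst hvq; rw [A.pos_succ_sq]; omega
    · rw [A.pos_succ_other hvp hvq]

/-- If the relative order of a pair differs at two times, the pair is swapped in between. -/
lemma flip_exists (A : AllowableSeq n) (u v : Fin n) (a : ℤ) (d : ℕ)
    (h : ¬(((A.pos a u : ℕ) < (A.pos a v : ℕ)) ↔
        ((A.pos (a + (d : ℤ)) u : ℕ) < (A.pos (a + (d : ℤ)) v : ℕ)))) :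
    ∃ s : ℤ, a ≤ s ∧ s < a + (d : ℤ) ∧
      ((u = A.sp s ∧ v = A.sq s) ∨ (u = A.sq s ∧ v = A.sp s)) := by
  induction d with
  | zero => simp at h
  | succ d ih =>
    by_cases hmid : ((A.pos a u : ℕ) < (A.pos a v : ℕ)) ↔
        ((A.pos (a + (d : ℤ)) u : ℕ) < (A.pos (a + (d : ℤ)) v : ℕ))
    · refine ⟨a + (d : ℤ), by omega, by push_cast; omega, ?_⟩
      by_contra hc
      push_neg at hc
      have := A.noflip (s := a + (d : ℤ)) (u := u) (v := v)
        (fun hx => (hc.1 hx.1 hx.2).elim) (fun hx => (hc.2 hx.1 hx.2).elim)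
      rw [show a + (d : ℤ) + 1 = a + ((d + 1 : ℕ) : ℤ) by push_cast; ring] at this
      exact h (hmid.trans this.symm)
    · obtain ⟨s, hs1, hs2, hs3⟩ := ih hmid
      exact ⟨s, hs1, by push_cast; omega, hs3⟩

/-- Each pair is swapped at most once during a half-period. -/
lemma swap_once (A : AllowableSeq n) {s1 s2 : ℤ}
    (h1 : s1 ∈ Finset.Ico (0 : ℤ) (n.choose 2 : ℤ))
    (h2 : s2 ∈ Finset.Ico (0 : ℤ) (n.choose 2 : ℤ))
    (h : s(A.sp s1, A.sq s1) = s(A.sp s2, A.sq s2)) : s1 = s2 := by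
  classical
  have hsurj : ∀ z ∈ Finset.univ.filter (fun z : Sym2 (Fin n) => ¬ z.IsDiag),
      ∃ s, ∃ _ : s ∈ Finset.Ico (0 : ℤ) (n.choose 2 : ℤ),
        s(A.sp s, A.sq s) = z := by
    intro z hz
    rw [Finset.mem_filter] at hz
    induction z using Sym2.ind with
    | _ u v =>
      have huv : u ≠ v := by
        intro hx
        exact hz.2 (Sym2.mk_isDiag_iff.mpr hx)
      have hne : (A.pos 0 u : ℕ) ≠ (A.pos 0 v : ℕ) := fun hx => huv (A.pos_inj hx)
      have hrev : ∀ x, A.pos ((0 : ℤ) + ((n.choose 2 : ℕ) : ℤ)) x = Fin.rev (A.pos 0 x) := by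
        intro x
        rw [zero_add, show ((n.choose 2 : ℕ) : ℤ) = (0 : ℤ) + (n.choose 2 : ℤ) by ring,
          A.rev 0]
        rfl
      have hflip : ¬(((A.pos 0 u : ℕ) < (A.pos 0 v : ℕ)) ↔
          ((A.pos ((0 : ℤ) + ((n.choose 2 : ℕ) : ℤ)) u : ℕ) <
            (A.pos ((0 : ℤ) + ((n.choose 2 : ℕ) : ℤ)) v : ℕ))) := by
        rw [hrev u, hrev v]
        have h1 := Fin.rev_lt_rev (i := A.pos 0 u) (j := A.pos 0 v)
        rw [Fin.lt_def, Fin.lt_def] at h1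
        rw [h1]
        omega
      obtain ⟨s, hs1, hs2, hs3⟩ := A.flip_exists u v 0 (n.choose 2) hflip
      refine ⟨s, Finset.mem_Ico.mpr ⟨hs1, by simpa using hs2⟩, ?_⟩
      rcases hs3 with ⟨hu, hv⟩ | ⟨hu, hv⟩
      · rw [← hu, ← hv]
      · rw [← hu, ← hv, Sym2.eq_swap]
  have hmaps : ∀ s, s ∈ Finset.Ico (0 : ℤ) (n.choose 2 : ℤ) →
      s(A.sp s, A.sq s) ∈ Finset.univ.filter (fun z : Sym2 (Fin n) => ¬ z.IsDiag) := by
    intro s _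
    rw [Finset.mem_filter]
    exact ⟨Finset.mem_univ _, fun hd => A.sp_ne_sq s (Sym2.mk_isDiag_iff.mp hd)⟩
  have hcard : (Finset.Ico (0 : ℤ) (n.choose 2 : ℤ)).card ≤
      (Finset.univ.filter (fun z : Sym2 (Fin n) => ¬ z.IsDiag)).card := by
    rw [Int.card_Ico]
    rw [← Fintype.card_subtype]
    rw [Sym2.card_subtype_not_diag, Fintype.card_fin]
    simp
  exact Finset.inj_on_of_surj_on_of_card_le
    (f := fun s _ => s(A.sp s, A.sq s)) (fun s hs => hmaps s hs)
    (fun z hz => hsurj z hz) hcard h1 h2 h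

/-- Uniqueness of the `k`-th point of a set. -/
lemma kth_unique (A : AllowableSeq n) {H : Finset (Fin n)} {s : ℤ} {y z : Fin n}
    (hy : y ∈ H) (hz : z ∈ H)
    (h : (H.filter (fun x => A.pos s x < A.pos s y)).card
       = (H.filter (fun x => A.pos s x < A.pos s z)).card) : y = z := by
  classical
  rcases lt_trichotomy (A.pos s y) (A.pos s z) with hlt | heq | hlt
  · exfalso
    have hsub : H.filter (fun x => A.pos s x < A.pos s y) ⊆
        H.filter (fun x => A.pos s x < A.pos s z) :=
      Finset.monotone_filter_right _ (fun x _ hx => lt_trans hx hlt)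
    have hmem : y ∈ H.filter (fun x => A.pos s x < A.pos s z) :=
      Finset.mem_filter.mpr ⟨hy, hlt⟩
    have hnot : y ∉ H.filter (fun x => A.pos s x < A.pos s y) := by
      simp [Finset.mem_filter]
    have := Finset.card_lt_card ((Finset.ssubset_iff_of_subset hsub).mpr ⟨y, hmem, hnot⟩)
    omega
  · exact (A.pos s).injective heq
  · exfalso
    have hsub : H.filter (fun x => A.pos s x < A.pos s z) ⊆
        H.filter (fun x => A.pos s x < A.pos s y) :=
      Finset.monotone_filter_right _ (fun x _ hx => lt_trans hx hlt)
    have hmem : z ∈ H.filter (fun x => A.pos s x < A.pos s y) :=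
      Finset.mem_filter.mpr ⟨hz, hlt⟩
    have hnot : z ∉ H.filter (fun x => A.pos s x < A.pos s z) := by
      simp [Finset.mem_filter]
    have := Finset.card_lt_card ((Finset.ssubset_iff_of_subset hsub).mpr ⟨z, hmem, hnot⟩)
    omega

/-- Raising the threshold from `k` to `k+1` at time `s` adds the weight of `sp s`. -/
lemma sum_lt_succ_eq (A : AllowableSeq n) (s : ℤ) (w : Fin n → ℤ) :
    ∑ x : Fin n, (if (A.pos s x : ℕ) < (A.pos s (A.sp s) : ℕ) + 1 then w x else 0)
      = (∑ x : Fin n, (if (A.pos s x : ℕ) < (A.pos s (A.sp s) : ℕ) then w x else 0))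
        + w (A.sp s) := by
  classical
  have hpt : ∀ x : Fin n,
      (if (A.pos s x : ℕ) < (A.pos s (A.sp s) : ℕ) + 1 then w x else 0)
      = (if (A.pos s x : ℕ) < (A.pos s (A.sp s) : ℕ) then w x else 0)
        + (if x = A.sp s then w x else 0) := by
    intro x
    by_cases hxp : x = A.sp s
    · subst hxp
      rw [if_pos rfl, if_neg (lt_irrefl _), if_pos (Nat.lt_succ_self _)]
      ring
    · have hne : (A.pos s x : ℕ) ≠ (A.pos s (A.sp s) : ℕ) := fun h => hxp (A.pos_inj h)
      rw [if_neg hxp]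
      by_cases hlt : (A.pos s x : ℕ) < (A.pos s (A.sp s) : ℕ)
      · rw [if_pos hlt, if_pos (by omega)]; ring
      · rw [if_neg hlt, if_neg (by omega)]; ring
  rw [Finset.sum_congr rfl (fun x _ => hpt x), Finset.sum_add_distrib,
    Fintype.sum_ite_eq' (A.sp s) w]

/-- Across one step, the sum below the threshold `k+1` loses `w (sp s)` and gains `w (sq s)`. -/
lemma sum_swap_threshold (A : AllowableSeq n) (s : ℤ) (w : Fin n → ℤ) :
    ∑ x : Fin n, (if (A.pos (s+1) x : ℕ) < (A.pos s (A.sp s) : ℕ) + 1 then w x else 0)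
      = (∑ x : Fin n, (if (A.pos s x : ℕ) < (A.pos s (A.sp s) : ℕ) + 1 then w x else 0))
        - w (A.sp s) + w (A.sq s) := by
  classical
  have hpt : ∀ x : Fin n,
      (if (A.pos (s+1) x : ℕ) < (A.pos s (A.sp s) : ℕ) + 1 then w x else 0)
      = (if (A.pos s x : ℕ) < (A.pos s (A.sp s) : ℕ) + 1 then w x else 0)
        - (if x = A.sp s then w x else 0) + (if x = A.sq s then w x else 0) := by
    intro x
    by_cases hxp : x = A.sp s
    · subst hxp
      have e1 := A.pos_succ_sp s
      rw [if_neg (by omega), if_pos (by omega), if_pos rfl, if_neg (A.sp_ne_sq s)]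
      ring
    by_cases hxq : x = A.sq s
    · subst hxq
      have e1 := A.pos_succ_sq s
      have e2 := A.sq_pos s
      rw [if_pos (by omega), if_neg (by omega), if_neg hxp, if_pos rfl]
      ring
    · rw [A.pos_succ_other hxp hxq, if_neg hxp, if_neg hxq]
      ring
  rw [Finset.sum_congr rfl (fun x _ => hpt x), Finset.sum_add_distrib, Finset.sum_sub_distrib,
    Fintype.sum_ite_eq' (A.sp s) w, Fintype.sum_ite_eq' (A.sq s) w]

end AllowableSeq

open AllowableSeq

theorem Hi_up_change_balanced (n b r δ : ℕ) (A : AllowableSeq n) (blue : Fin n → Bool)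
    (hn : n = b + r)
    (hb : (Finset.univ.filter (fun x => blue x = true)).card = b)
    (hr : (Finset.univ.filter (fun x => blue x = false)).card = r)
    (hbr : b = r + 2 * δ)
    (Γ : ℤ → Fin n) (hΓblue : ∀ t : ℤ, blue (Γ t) = true)
    (hΓ : A.IsMaxBorder blue (δ : ℤ) Γ)
    (H : Finset (Fin n))
    (hH : H = Finset.univ.filter (fun x => blue x = true ∧
      A.pos 0 (mirror Γ 0) ≤ A.pos 0 x))
    (i : ℕ) (hi1 : 1 ≤ i) (hi2 : i ≤ H.card)
    (γ : ℤ → Fin n) (hγ : A.IsKth H i γ)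
    (t : ℤ) (ht0 : 0 ≤ t) (htN : t < (n.choose 2 : ℤ))
    (h1 : A.cweight blue γ t = (δ : ℤ) - 1) (h2 : A.cweight blue γ (t+1) = (δ : ℤ)) :
    ∃ f x : Fin n, f ∈ H ∧ blue x = false ∧ A.SwapsAt t f x ∧
      (A.pos t f : ℕ) = (A.pos t x : ℕ) + 1 ∧
      A.BalancedSwap blue (δ : ℤ) t f x ∧
      (H.filter (fun y =>
        (A.pos t y : ℕ) < min (A.pos t f : ℕ) (A.pos t x : ℕ))).card = i - 1 := by
  classical
  have hpq : A.sp t ≠ A.sq t := A.sp_ne_sq t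
  have hk : (A.pos t (A.sq t) : ℕ) = (A.pos t (A.sp t) : ℕ) + 1 := A.sq_pos t
  have hp1v : (A.pos (t+1) (A.sp t) : ℕ) = (A.pos t (A.sp t) : ℕ) + 1 := A.pos_succ_sp t
  have hq1v : (A.pos (t+1) (A.sq t) : ℕ) = (A.pos t (A.sp t) : ℕ) := A.pos_succ_sq t
  have hγtH := (hγ t).1
  have hγtcnt := (hγ t).2
  have hγt1H := (hγ (t+1)).1
  have hγt1cnt := (hγ (t+1)).2
  have hHblue : ∀ y ∈ H, blue y = true := by
    intro y hy; rw [hH] at hy; exact (Finset.mem_filter.mp hy).2.1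
  have hHpos : ∀ y ∈ H, (A.pos 0 (mirror Γ 0) : ℕ) ≤ (A.pos 0 y : ℕ) := by
    intro y hy; rw [hH] at hy; exact Fin.le_def.mp (Finset.mem_filter.mp hy).2.2
  have hnotH : ∀ y : Fin n, blue y = true → y ∉ H →
      (A.pos 0 y : ℕ) < (A.pos 0 (mirror Γ 0) : ℕ) := by
    intro y hby hyH
    by_contra hc
    exact hyH (by
      rw [hH, Finset.mem_filter]
      exact ⟨Finset.mem_univ _, hby, Fin.le_def.mpr (by omega)⟩)
  -- A blue point outside `H` cannot cross a point of `H` from right to left in `[0, N)`.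
  have crossContra : γ t = A.sp t → blue (A.sq t) = true → A.sq t ∉ H → False := by
    intro hgp hqb hqH
    have hpH : A.sp t ∈ H := hgp ▸ hγtH
    have h0q := hnotH _ hqb hqH
    have h0p := hHpos _ hpH
    have hflip : ¬(((A.pos 0 (A.sp t) : ℕ) < (A.pos 0 (A.sq t) : ℕ)) ↔
        ((A.pos ((0:ℤ) + (t.toNat : ℤ)) (A.sp t) : ℕ) <
          (A.pos ((0:ℤ) + (t.toNat : ℤ)) (A.sq t) : ℕ))) := by
      rw [show ((0:ℤ) + (t.toNat : ℤ)) = t by omega]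
      omega
    obtain ⟨s, hs0, hs1, hs2⟩ := A.flip_exists (A.sp t) (A.sq t) 0 t.toNat hflip
    have heq : s = t := by
      apply A.swap_once (Finset.mem_Ico.mpr ⟨hs0, by omega⟩) (Finset.mem_Ico.mpr ⟨ht0, htN⟩)
      rcases hs2 with ⟨hu, hv⟩ | ⟨hu, hv⟩
      · rw [← hu, ← hv]
      · rw [← hu, ← hv, Sym2.eq_swap]
    omega
  -- determination of `γ (t+1)`
  have hdet : ∀ z ∈ H,
      (H.filter (fun x => A.pos (t+1) x < A.pos (t+1) z)).card = i - 1 → γ (t+1) = z := by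
    intro z hz hc
    exact A.kth_unique hγt1H hz (by rw [hγt1cnt, hc])
  by_cases hgp : γ t = A.sp t
  · by_cases hqH : A.sq t ∈ H
    · -- both swapped points in `H`: the weight of `γ` cannot change — contradiction
      exfalso
      have hfeq : H.filter (fun x => A.pos (t+1) x < A.pos (t+1) (A.sq t))
          = H.filter (fun x => A.pos t x < A.pos t (γ t)) := by
        apply Finset.filter_congr
        intro x _
        simp only [Fin.lt_def, hq1v, hgp]
        exact A.setshift (by omega) x
      have hg1 : γ (t+1) = A.sq t := hdet _ hqH (by rw [hfeq, hγtcnt])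
      have hce : A.cweight blue γ (t+1) = A.cweight blue γ t := by
        simp only [cweight, Fin.lt_def, hg1, hgp, hq1v]
        exact Finset.sum_congr rfl (fun x _ => if_congr (A.setshift (by omega) x) rfl rfl)
      omega
    · -- a blue point outside `H` would cross leftwards: impossible
      exfalso
      have hpH : A.sp t ∈ H := hgp ▸ hγtH
      have hfeq : H.filter (fun x => A.pos (t+1) x < A.pos (t+1) (A.sp t))
          = H.filter (fun x => A.pos t x < A.pos t (γ t)) := by
        apply Finset.filter_congr
        intro x hx
        simp only [Fin.lt_def, hp1v, hgp]
        have hxq : x ≠ A.sq t := fun hc => hqH (hc ▸ hx)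
        by_cases hxp : x = A.sp t
        · subst hxp; rw [hp1v]; omega
        · rw [A.pos_succ_other hxp hxq]
          have hne : (A.pos t x : ℕ) ≠ (A.pos t (A.sp t) : ℕ) := fun hc => hxp (A.pos_inj hc)
          omega
      have hg1 : γ (t+1) = A.sp t := hdet _ hpH (by rw [hfeq, hγtcnt])
      have hsum : A.cweight blue γ (t+1) = A.cweight blue γ t + wt blue (A.sq t) := by
        simp only [cweight, Fin.lt_def, hg1, hgp, hp1v]
        rw [A.sum_swap_threshold t (wt blue), A.sum_lt_succ_eq t (wt blue)]
        ring
      have hbq : blue (A.sq t) = true := by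
        have hw : wt blue (A.sq t) = 1 := by omega
        by_cases hb : blue (A.sq t) = true
        · exact hb
        · simp only [wt, if_neg hb] at hw; omega
      exact crossContra hgp hbq hqH
  · by_cases hgq : γ t = A.sq t
    · have hqH : A.sq t ∈ H := hgq ▸ hγtH
      by_cases hpH : A.sp t ∈ H
      · -- both swapped points in `H`: contradiction again
        exfalso
        have hset : H.filter (fun x => A.pos (t+1) x < A.pos (t+1) (A.sp t))
            = insert (A.sq t)
                ((H.filter (fun x => A.pos t x < A.pos t (γ t))).erase (A.sp t)) := by
          ext x
          simp only [Finset.mem_insert, Finset.mem_erase, Finset.mem_filter, Fin.lt_def]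
          constructor
          · rintro ⟨hxH, hlt⟩
            by_cases hxq : x = A.sq t
            · exact Or.inl hxq
            · right
              have hxp : x ≠ A.sp t := by
                intro hc; rw [hc] at hlt; exact lt_irrefl _ hlt
              refine ⟨hxp, hxH, ?_⟩
              rw [A.pos_succ_other hxp hxq, hp1v] at hlt
              rw [hgq, hk]
              omega
          · rintro (hxq | ⟨hxp, hxH, hlt⟩)
            · subst hxq
              refine ⟨hqH, ?_⟩
              rw [hq1v, hp1v]
              omega
            · refine ⟨hxH, ?_⟩
              have hxq : x ≠ A.sq t := by
                intro hc; rw [hc, hgq] at hlt; exact lt_irrefl _ hlt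
              rw [A.pos_succ_other hxp hxq, hp1v]
              rw [hgq, hk] at hlt
              omega
        have hpmem : A.sp t ∈ H.filter (fun x => A.pos t x < A.pos t (γ t)) := by
          rw [Finset.mem_filter]
          refine ⟨hpH, ?_⟩
          simp only [Fin.lt_def, hgq, hk]
          omega
        have hqnot : A.sq t ∉ (H.filter (fun x => A.pos t x < A.pos t (γ t))).erase (A.sp t) := by
          intro hc
          have := (Finset.mem_filter.mp (Finset.mem_erase.mp hc).2).2
          rw [hgq] at this
          exact lt_irrefl _ this
        have hcard1 : 0 < (H.filter (fun x => A.pos t x < A.pos t (γ t))).card :=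
          Finset.card_pos.mpr ⟨_, hpmem⟩
        have hcnt1 : (H.filter (fun x => A.pos (t+1) x < A.pos (t+1) (A.sp t))).card = i - 1 := by
          rw [hset, Finset.card_insert_of_notMem hqnot, Finset.card_erase_of_mem hpmem]
          rw [hγtcnt] at hcard1 ⊢
          omega
        have hg1 : γ (t+1) = A.sp t := hdet _ hpH hcnt1
        have hwpq : wt blue (A.sp t) = wt blue (A.sq t) := by
          simp [wt, hHblue _ hpH, hHblue _ hqH]
        have hce : A.cweight blue γ (t+1) = A.cweight blue γ t := by
          simp only [cweight, Fin.lt_def, hg1, hgq, hp1v, hk]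
          rw [A.sum_swap_threshold t (wt blue)]
          omega
        omega
      · -- the good case: `τ_{t+1}` swaps `sq t ∈ H` leftwards past the red point `sp t`
        have hg1cnt : (H.filter (fun x => A.pos (t+1) x < A.pos (t+1) (A.sq t))).card
            = i - 1 := by
          rw [← hγtcnt]
          refine congrArg Finset.card (Finset.filter_congr ?_)
          intro x hx
          simp only [Fin.lt_def, hq1v, hgq, hk]
          have hxp : x ≠ A.sp t := fun hc => hpH (hc ▸ hx)
          by_cases hxq : x = A.sq t
          · subst hxq; rw [hq1v, hk]; omega
          · rw [A.pos_succ_other hxp hxq]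
            have hne : (A.pos t x : ℕ) ≠ (A.pos t (A.sp t) : ℕ) := fun hc => hxp (A.pos_inj hc)
            omega
        have hg1 : γ (t+1) = A.sq t := hdet _ hqH hg1cnt
        have hsum2 : A.cweight blue γ (t+1)
            = ∑ x : Fin n, (if (A.pos t x : ℕ) < (A.pos t (A.sp t) : ℕ)
                then wt blue x else 0) := by
          simp only [cweight, Fin.lt_def, hg1, hq1v]
          exact Finset.sum_congr rfl (fun x _ => if_congr (A.setshift (by omega) x) rfl rfl)
        have hsum1 : A.cweight blue γ t
            = (∑ x : Fin n, (if (A.pos t x : ℕ) < (A.pos t (A.sp t) : ℕ)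
                then wt blue x else 0)) + wt blue (A.sp t) := by
          simp only [cweight, Fin.lt_def, hgq, hk]
          exact A.sum_lt_succ_eq t (wt blue)
        have hwp : wt blue (A.sp t) = -1 := by omega
        have hbp : blue (A.sp t) = false := by
          by_cases hb : blue (A.sp t) = true
          · simp only [wt, if_pos hb] at hwp; omega
          · simpa using hb
        have hswap : A.SwapsAt t (A.sq t) (A.sp t) := by
          refine ⟨fun hc => hpq hc.symm, ?_⟩
          rw [Equiv.swap_comm]
          exact A.pos_succ_s17 t
        have hmin : min ((A.pos t (A.sq t)) : ℕ) ((A.pos t (A.sp t)) : ℕ)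
            = (A.pos t (A.sp t) : ℕ) := by omega
        refine ⟨A.sq t, A.sp t, hqH, hbp, hswap, hk, ⟨hswap, ?_, ?_⟩, ?_⟩
        · simp [hHblue _ hqH, hbp]
        · simp only [hmin]
          omega
        · simp only [hmin]
          rw [← hγtcnt]
          refine congrArg Finset.card (Finset.filter_congr ?_)
          intro x hx
          simp only [Fin.lt_def, hgq, hk]
          have hxp : x ≠ A.sp t := fun hc => hpH (hc ▸ hx)
          have hne : (A.pos t x : ℕ) ≠ (A.pos t (A.sp t) : ℕ) := fun hc => hxp (A.pos_inj hc)
          omega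
    · -- `γ t` is not one of the swapped points: its weight cannot change — contradiction
      exfalso
      have hgv : A.pos (t+1) (γ t) = A.pos t (γ t) := A.pos_succ_other hgp hgq
      have hm1 : (A.pos t (γ t) : ℕ) ≠ (A.pos t (A.sp t) : ℕ) + 1 := by
        intro hc
        exact hgq (A.pos_inj (s := t) (x := γ t) (y := A.sq t) (by omega))
      have hfeq : H.filter (fun x => A.pos (t+1) x < A.pos (t+1) (γ t))
          = H.filter (fun x => A.pos t x < A.pos t (γ t)) := by
        apply Finset.filter_congr
        intro x _
        simp only [Fin.lt_def, hgv]
        exact A.setshift hm1 x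
      have hg1 : γ (t+1) = γ t := hdet _ hγtH (by rw [hfeq, hγtcnt])
      have hce : A.cweight blue γ (t+1) = A.cweight blue γ t := by
        simp only [cweight, Fin.lt_def, hg1, hgv]
        exact Finset.sum_congr rfl (fun x _ => if_congr (A.setshift hm1 x) rfl rfl)
      omega
end
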